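/- arXiv:0712.4396 — 10 statements merged into one kernel-verified Lean document; each statement's English description precedes it below -/
import Mathlib

section
/- Under the stated abstract setting, if λ_m < λ_{m+1}, then Σ_{i=1}^m ρ_i ≤ (Σ_{i=1}^m Λ_i)/(λ_{m+1} − λ_m). -/
open scoped ComplexInnerProductSpace

theorem stmt0
    {H : Type*} [NormedAddCommGroup H] [InnerProductSpace ℂ H] [CompleteSpace H]
    (A : H →ₗ[ℂ] H)
    (hAsymm : ∀ x y : H, ⟪A x, y⟫ = ⟪x, A y⟫)
    (u : ℕ → H) (lam : ℕ → ℝ)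
    (huon : ∀ i j : ℕ, 1 ≤ i → 1 ≤ j → ⟪u i, u j⟫ = if i = j then 1 else 0)
    (hmono : ∀ i j : ℕ, 1 ≤ i → i ≤ j → lam i ≤ lam j)
    (heig : ∀ i : ℕ, 1 ≤ i → A (u i) = (lam i : ℂ) • u i)
    (N : ℕ) (hN : 1 ≤ N)
    (B : Fin N → H →ₗ[ℂ] H)
    (hBsymm : ∀ (k : Fin N) (x y : H), ⟪B k x, y⟫ = ⟪x, B k y⟫)
    (m : ℕ) (hm : 1 ≤ m)
    (hRR : ∀ φ : H, (∀ j : ℕ, 1 ≤ j → j ≤ m → ⟪φ, u j⟫ = 0) →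
      lam (m + 1) * ‖φ‖ ^ 2 ≤ (⟪A φ, φ⟫).re)
    (hgap : lam m < lam (m + 1))
 :
    ∑ i ∈ Finset.Icc 1 m, (∑ k : Fin N, (⟪(A ∘ₗ B k - B k ∘ₗ A) (u i), B k (u i)⟫).re)
      ≤ (∑ i ∈ Finset.Icc 1 m, (∑ k : Fin N, ‖(A ∘ₗ B k - B k ∘ₗ A) (u i)‖ ^ 2))
        / (lam (m + 1) - lam m) := by
  have hg : (0:ℝ) < lam (m+1) - lam m := by linarith
  set g : ℝ := lam (m+1) - lam m with hgdef
  -- commutator applied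
  have hCapp : ∀ (k : Fin N) (x : H), (A ∘ₗ B k - B k ∘ₗ A) x = A (B k x) - B k (A x) := by
    intro k x; simp
  -- abbreviations
  set C : ℕ → Fin N → H := fun i k => A (B k (u i)) - B k (A (u i)) with hCdef
  set φ : ℕ → Fin N → H :=
    fun i k => B k (u i) - ∑ j ∈ Finset.Icc 1 m, ⟪u j, B k (u i)⟫ • u j with hφdef
  -- orthogonality of φ
  have horth : ∀ i (k : Fin N) (j : ℕ), 1 ≤ j → j ≤ m → ⟪φ i k, u j⟫ = 0 := by
    intro i k j hj1 hjm
    simp only [hφdef, inner_sub_left, sum_inner, inner_smul_left]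
    rw [Finset.sum_eq_single j]
    · rw [huon j j hj1 hj1]
      simp [inner_conj_symm]
    · intro b hb hbj
      rw [huon b j (Finset.mem_Icc.mp hb).1 hj1, if_neg hbj, mul_zero]
    · intro h; exact absurd (Finset.mem_Icc.mpr ⟨hj1, hjm⟩) h
  -- inner products of C with eigenvectors
  have hCuj : ∀ i (k : Fin N) (j : ℕ), 1 ≤ i → 1 ≤ j →
      ⟪C i k, u j⟫ = ((lam j : ℂ) - (lam i : ℂ)) * ⟪B k (u i), u j⟫ := by
    intro i k j hi hj
    simp only [hCdef, inner_sub_left]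
    rw [hAsymm, heig j hj, inner_smul_right, heig i hi, map_smul, inner_smul_left]
    rw [Complex.conj_ofReal]
    ring
  -- decomposition of C as (A - lam i) applied to B k (u i)
  have hCeq : ∀ i (k : Fin N), 1 ≤ i → C i k = A (B k (u i)) - (lam i : ℂ) • B k (u i) := by
    intro i k hi
    simp only [hCdef, heig i hi, map_smul]
  have horth' : ∀ i (k : Fin N) (j : ℕ), 1 ≤ j → j ≤ m → ⟪u j, φ i k⟫ = 0 := by
    intro i k j hj1 hjm
    rw [← inner_conj_symm, horth i k j hj1 hjm, map_zero]
  -- inner of C with φ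
  have hCphi : ∀ i (k : Fin N), 1 ≤ i →
      (⟪C i k, φ i k⟫).re = (⟪A (φ i k), φ i k⟫).re - lam i * ‖φ i k‖^2 := by
    intro i k hi
    have hw : B k (u i) = φ i k + ∑ j ∈ Finset.Icc 1 m, ⟪u j, B k (u i)⟫ • u j := by
      simp [hφdef]
    rw [hCeq i k hi]
    nth_rewrite 1 [hw]
    nth_rewrite 2 [hw]
    rw [map_add, inner_sub_left, inner_add_left, smul_add, inner_add_left]
    have h1 : ⟪A (∑ j ∈ Finset.Icc 1 m, ⟪u j, B k (u i)⟫ • u j), φ i k⟫ = 0 := by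
      rw [map_sum, sum_inner]
      apply Finset.sum_eq_zero
      intro j hj
      rw [map_smul, heig j (Finset.mem_Icc.mp hj).1, inner_smul_left, inner_smul_left,
        horth' i k j (Finset.mem_Icc.mp hj).1 (Finset.mem_Icc.mp hj).2]
      simp
    have h2 : ⟪(lam i : ℂ) • ∑ j ∈ Finset.Icc 1 m, ⟪u j, B k (u i)⟫ • u j, φ i k⟫ = 0 := by
      rw [inner_smul_left, sum_inner]
      rw [Finset.sum_eq_zero]
      · simp
      · intro j hj
        rw [inner_smul_left, horth' i k j (Finset.mem_Icc.mp hj).1 (Finset.mem_Icc.mp hj).2,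
          mul_zero]
    rw [h1, h2, inner_smul_left, inner_self_eq_norm_sq_to_K, Complex.conj_ofReal]
    push_cast
    simp [Complex.sub_re, Complex.mul_re]
    left
    norm_cast
  -- lower bound via Rayleigh-Ritz
  have hlow : ∀ i (k : Fin N), 1 ≤ i → i ≤ m →
      g * ‖φ i k‖^2 ≤ (⟪C i k, φ i k⟫).re := by
    intro i k hi him
    have h1 := hRR (φ i k) (horth i k)
    have h2 := hmono i m hi him
    have h3 : (0:ℝ) ≤ ‖φ i k‖^2 := sq_nonneg _
    rw [hCphi i k hi]
    nlinarith
  -- upper bound via Cauchy-Schwarz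
  have hup : ∀ i (k : Fin N), (⟪C i k, φ i k⟫).re ≤ ‖C i k‖ * ‖φ i k‖ := by
    intro i k
    refine le_trans (Complex.re_le_norm _) ?_
    exact norm_inner_le_norm _ _
  -- combined bound
  have hr : ∀ i (k : Fin N), 1 ≤ i → i ≤ m →
      (⟪C i k, φ i k⟫).re ≤ ‖C i k‖^2 / g := by
    intro i k hi him
    rcases le_or_gt (⟪C i k, φ i k⟫).re 0 with h | h
    · exact h.trans (by positivity)
    · rw [le_div_iff₀ hg]
      have h1 := hup i k
      have h2 := hlow i k hi him
      have h1sq := mul_self_le_mul_self h.le h1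
      nlinarith [mul_le_mul_of_nonneg_left h1sq hg.le,
        mul_le_mul_of_nonneg_left h2 (sq_nonneg ‖C i k‖), h]
  -- decomposition of the main quantity
  have hdec : ∀ i (k : Fin N), 1 ≤ i →
      (⟪C i k, B k (u i)⟫).re = (⟪C i k, φ i k⟫).re
        + ∑ j ∈ Finset.Icc 1 m, (lam j - lam i) * ‖⟪B k (u i), u j⟫‖^2 := by
    intro i k hi
    have hw : B k (u i) = φ i k + ∑ j ∈ Finset.Icc 1 m, ⟪u j, B k (u i)⟫ • u j := by
      simp [hφdef]
    nth_rewrite 1 [hw]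
    rw [inner_add_right, Complex.add_re, inner_sum]
    congr 1
    rw [Complex.re_sum]
    apply Finset.sum_congr rfl
    intro j hj
    rw [inner_smul_right, hCuj i k j hi (Finset.mem_Icc.mp hj).1]
    have hconj : ⟪u j, B k (u i)⟫ = (starRingEnd ℂ) ⟪B k (u i), u j⟫ :=
      (inner_conj_symm _ _).symm
    rw [hconj]
    have hzz : (starRingEnd ℂ) ⟪B k (u i), u j⟫ * (((lam j : ℂ) - (lam i : ℂ)) * ⟪B k (u i), u j⟫)
        = ((lam j - lam i : ℝ) : ℂ) * ((‖⟪B k (u i), u j⟫‖ : ℂ))^2 := by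
      rw [mul_comm, mul_assoc, Complex.mul_conj']
      push_cast
      ring
    rw [hzz, ← Complex.ofReal_pow, ← Complex.ofReal_mul, Complex.ofReal_re]
  -- symmetry of the matrix elements
  have hsymm : ∀ (k : Fin N) i j, ‖⟪B k (u i), u j⟫‖ = ‖⟪B k (u j), u i⟫‖ := by
    intro k i j
    rw [hBsymm]
    exact norm_inner_symm _ _
  -- antisymmetric double sums vanish
  have key : ∀ (F : ℕ → ℕ → ℝ), (∀ i j, F i j = - F j i) →
      ∑ i ∈ Finset.Icc 1 m, ∑ j ∈ Finset.Icc 1 m, F i j = 0 := by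
    intro F hF
    have h1 : ∑ i ∈ Finset.Icc 1 m, ∑ j ∈ Finset.Icc 1 m, F i j
        = ∑ j ∈ Finset.Icc 1 m, ∑ i ∈ Finset.Icc 1 m, F i j := Finset.sum_comm
    have h2 : ∑ j ∈ Finset.Icc 1 m, ∑ i ∈ Finset.Icc 1 m, F i j
        = ∑ j ∈ Finset.Icc 1 m, ∑ i ∈ Finset.Icc 1 m, - F j i :=
      Finset.sum_congr rfl fun j _ => Finset.sum_congr rfl fun i _ => hF i j
    have h3 : ∑ j ∈ Finset.Icc 1 m, ∑ i ∈ Finset.Icc 1 m, - F j i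
        = - ∑ j ∈ Finset.Icc 1 m, ∑ i ∈ Finset.Icc 1 m, F j i := by
      simp
    linarith [h1.trans (h2.trans h3)]
  have hT : ∑ i ∈ Finset.Icc 1 m, ∑ j ∈ Finset.Icc 1 m,
      (∑ k : Fin N, (lam j - lam i) * ‖⟪B k (u i), u j⟫‖^2) = 0 := by
    apply key
    intro i j
    rw [← Finset.sum_neg_distrib]
    apply Finset.sum_congr rfl
    intro k _
    rw [hsymm k i j]
    ring
  have hCapp' : ∀ i (k : Fin N), (A ∘ₗ B k - B k ∘ₗ A) (u i) = C i k := by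
    intro i k; rw [hCapp]
  calc ∑ i ∈ Finset.Icc 1 m, ∑ k : Fin N, (⟪(A ∘ₗ B k - B k ∘ₗ A) (u i), B k (u i)⟫).re
      = ∑ i ∈ Finset.Icc 1 m, ∑ k : Fin N, ((⟪C i k, φ i k⟫).re
          + ∑ j ∈ Finset.Icc 1 m, (lam j - lam i) * ‖⟪B k (u i), u j⟫‖^2) := by
        refine Finset.sum_congr rfl fun i hi => Finset.sum_congr rfl fun k _ => ?_
        rw [hCapp', hdec i k (Finset.mem_Icc.mp hi).1]
    _ = (∑ i ∈ Finset.Icc 1 m, ∑ k : Fin N, (⟪C i k, φ i k⟫).re)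
          + ∑ i ∈ Finset.Icc 1 m, ∑ j ∈ Finset.Icc 1 m,
              (∑ k : Fin N, (lam j - lam i) * ‖⟪B k (u i), u j⟫‖^2) := by
        rw [← Finset.sum_add_distrib]
        refine Finset.sum_congr rfl fun i _ => ?_
        rw [Finset.sum_add_distrib, Finset.sum_comm]
    _ = ∑ i ∈ Finset.Icc 1 m, ∑ k : Fin N, (⟪C i k, φ i k⟫).re := by
        rw [hT, add_zero]
    _ ≤ ∑ i ∈ Finset.Icc 1 m, ∑ k : Fin N, ‖C i k‖^2 / g := by
        refine Finset.sum_le_sum fun i hi => Finset.sum_le_sum fun k _ => ?_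
        exact hr i k (Finset.mem_Icc.mp hi).1 (Finset.mem_Icc.mp hi).2
    _ = (∑ i ∈ Finset.Icc 1 m, ∑ k : Fin N, ‖C i k‖^2) / g := by
        rw [Finset.sum_div]
        exact Finset.sum_congr rfl fun i _ => (Finset.sum_div _ _ _).symm
    _ = (∑ i ∈ Finset.Icc 1 m, ∑ k : Fin N, ‖(A ∘ₗ B k - B k ∘ₗ A) (u i)‖^2) / g := by
        simp only [hCapp']
end

section
/- Under the stated abstract setting, if λ_m < λ_{m+1}, then Σ_{i=1}^m ρ_i ≤ Σ_{i=1}^m Λ_i/(λ_{m+1} − λ_i). -/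
open scoped ComplexInnerProductSpace

theorem stmt1
    {H : Type*} [NormedAddCommGroup H] [InnerProductSpace ℂ H] [CompleteSpace H]
    (A : H →ₗ[ℂ] H)
    (hAsymm : ∀ x y : H, ⟪A x, y⟫ = ⟪x, A y⟫)
    (u : ℕ → H) (lam : ℕ → ℝ)
    (huon : ∀ i j : ℕ, 1 ≤ i → 1 ≤ j → ⟪u i, u j⟫ = if i = j then 1 else 0)
    (hmono : ∀ i j : ℕ, 1 ≤ i → i ≤ j → lam i ≤ lam j)
    (heig : ∀ i : ℕ, 1 ≤ i → A (u i) = (lam i : ℂ) • u i)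
    (N : ℕ) (hN : 1 ≤ N)
    (B : Fin N → H →ₗ[ℂ] H)
    (hBsymm : ∀ (k : Fin N) (x y : H), ⟪B k x, y⟫ = ⟪x, B k y⟫)
    (m : ℕ) (hm : 1 ≤ m)
    (hRR : ∀ φ : H, (∀ j : ℕ, 1 ≤ j → j ≤ m → ⟪φ, u j⟫ = 0) →
      lam (m + 1) * ‖φ‖ ^ 2 ≤ (⟪A φ, φ⟫).re)
    (hgap : lam m < lam (m + 1))
 :
    ∑ i ∈ Finset.Icc 1 m, (∑ k : Fin N, (⟪(A ∘ₗ B k - B k ∘ₗ A) (u i), B k (u i)⟫).re)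
      ≤ ∑ i ∈ Finset.Icc 1 m, (∑ k : Fin N, ‖(A ∘ₗ B k - B k ∘ₗ A) (u i)‖ ^ 2) / (lam (m + 1) - lam i) := by
  classical
  set I := Finset.Icc 1 m with hIdef
  have hmemI : ∀ {j : ℕ}, j ∈ I → 1 ≤ j ∧ j ≤ m := fun h => Finset.mem_Icc.mp h
  set P : H → H := fun x => ∑ j ∈ I, ⟪u j, x⟫ • u j with hPdef
  -- coefficient extraction
  have hPcoef : ∀ (x : H) (j : ℕ), j ∈ I → ⟪u j, P x⟫ = ⟪u j, x⟫ := by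
    intro x j hj
    simp only [hPdef]
    rw [inner_sum, Finset.sum_eq_single j]
    · rw [inner_smul_right, huon j j (hmemI hj).1 (hmemI hj).1]
      simp
    · intro b hb hbj
      rw [inner_smul_right, huon j b (hmemI hj).1 (hmemI hb).1,
        if_neg (fun h => hbj h.symm), mul_zero]
    · intro h; exact absurd hj h
  have hPorth : ∀ (x : H) (j : ℕ), j ∈ I → ⟪u j, x - P x⟫ = 0 := by
    intro x j hj
    rw [inner_sub_right, hPcoef x j hj, sub_self]
  have hPorth' : ∀ (x y : H), ⟪P y, x - P x⟫ = 0 := by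
    intro x y
    simp only [hPdef]
    rw [sum_inner]
    refine Finset.sum_eq_zero fun j hj => ?_
    rw [inner_smul_left, hPorth x j hj, mul_zero]
  have hreconj : ∀ c : ℂ, ((starRingEnd ℂ) c * c).re = ‖c‖ ^ 2 := by
    intro c
    rw [mul_comm, Complex.mul_conj]
    simp [Complex.normSq_eq_norm_sq, ← Complex.ofReal_pow]
  -- Pythagoras
  have hPyth : ∀ x : H, ‖x‖ ^ 2 = (∑ j ∈ I, ‖⟪u j, x⟫‖ ^ 2) + ‖x - P x‖ ^ 2 := by
    intro x
    have hx : P x + (x - P x) = x := by abel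
    have h0 := norm_add_sq_eq_norm_sq_add_norm_sq_of_inner_eq_zero (P x) (x - P x)
      (hPorth' x x)
    rw [hx] at h0
    have hPx : ‖P x‖ ^ 2 = ∑ j ∈ I, ‖⟪u j, x⟫‖ ^ 2 := by
      have h1 : (⟪P x, P x⟫ : ℂ).re = ∑ j ∈ I, ‖⟪u j, x⟫‖ ^ 2 := by
        nth_rewrite 1 [hPdef]
        rw [sum_inner, Complex.re_sum]
        refine Finset.sum_congr rfl fun j hj => ?_
        rw [inner_smul_left, hPcoef x j hj, hreconj]
      rw [← h1, inner_self_eq_norm_sq_to_K]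
      simp [← Complex.ofReal_pow]
    nlinarith [norm_nonneg x, norm_nonneg (P x), norm_nonneg (x - P x)]
  -- eigen relation
  have hTinner : ∀ (k : Fin N) (i j : ℕ), 1 ≤ i → 1 ≤ j →
      ⟪u j, (A ∘ₗ B k - B k ∘ₗ A) (u i)⟫
        = (((lam j : ℝ) - lam i : ℝ) : ℂ) * ⟪u j, B k (u i)⟫ := by
    intro k i j hi hj
    simp only [LinearMap.sub_apply, LinearMap.comp_apply, inner_sub_right]
    rw [← hAsymm, heig j hj, heig i hi, map_smul, inner_smul_left, inner_smul_right]
    rw [Complex.conj_ofReal]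
    push_cast
    ring
  have hδ : ∀ i ∈ I, 0 < lam (m + 1) - lam i := by
    intro i hi
    have := hmono i m (hmemI hi).1 (hmemI hi).2
    linarith
  -- per-term decomposition
  have hsplit : ∀ (i : ℕ), i ∈ I → ∀ (k : Fin N),
      (⟪(A ∘ₗ B k - B k ∘ₗ A) (u i), B k (u i)⟫).re
        = (∑ j ∈ I, (lam j - lam i) * ‖⟪u j, B k (u i)⟫‖ ^ 2)
          + (⟪(A ∘ₗ B k - B k ∘ₗ A) (u i) - P ((A ∘ₗ B k - B k ∘ₗ A) (u i)),
              B k (u i) - P (B k (u i))⟫).re := by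
    intro i hi k
    set Tv := (A ∘ₗ B k - B k ∘ₗ A) (u i) with hTv
    set Bv := B k (u i) with hBv
    have hd : (⟪Tv, Bv⟫ : ℂ) = ⟪Tv, P Bv⟫ + ⟪Tv, Bv - P Bv⟫ := by
      rw [← inner_add_right]
      congr 1
      abel
    have h1 : (⟪Tv, P Bv⟫ : ℂ).re = ∑ j ∈ I, (lam j - lam i) * ‖⟪u j, Bv⟫‖ ^ 2 := by
      have : (⟪Tv, P Bv⟫ : ℂ) = ∑ j ∈ I,
          (((lam j : ℝ) - lam i : ℝ) : ℂ) * (⟪u j, Bv⟫ * (starRingEnd ℂ) ⟪u j, Bv⟫) := by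
        simp only [hPdef]
        rw [inner_sum]
        refine Finset.sum_congr rfl fun j hj => ?_
        rw [inner_smul_right,
          show (⟪Tv, u j⟫ : ℂ) = (starRingEnd ℂ) ⟪u j, Tv⟫ from (inner_conj_symm _ _).symm,
          hTinner k i j (hmemI hi).1 (hmemI hj).1, map_mul, Complex.conj_ofReal]
        ring
      rw [this, Complex.re_sum]
      refine Finset.sum_congr rfl fun j hj => ?_
      rw [Complex.mul_conj]
      simp [Complex.normSq_eq_norm_sq, ← Complex.ofReal_pow,
        ← Complex.ofReal_mul]
    have h2 : (⟪Tv, Bv - P Bv⟫ : ℂ) = ⟪Tv - P Tv, Bv - P Bv⟫ := by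
      rw [inner_sub_left, hPorth' Bv Tv, sub_zero]
    rw [hd, Complex.add_re, h1, h2]
  -- the middle estimate
  have hmid : ∀ (i : ℕ), i ∈ I → ∀ (k : Fin N),
      (⟪(A ∘ₗ B k - B k ∘ₗ A) (u i) - P ((A ∘ₗ B k - B k ∘ₗ A) (u i)),
          B k (u i) - P (B k (u i))⟫).re
        ≤ ‖(A ∘ₗ B k - B k ∘ₗ A) (u i)‖ ^ 2 / (lam (m + 1) - lam i)
          - (∑ j ∈ I, ‖⟪u j, (A ∘ₗ B k - B k ∘ₗ A) (u i)⟫‖ ^ 2) / (lam (m + 1) - lam i) := by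
    intro i hi k
    set Tv := (A ∘ₗ B k - B k ∘ₗ A) (u i) with hTv
    set Bv := B k (u i) with hBv
    set ψ := Tv - P Tv with hψ
    set φ := Bv - P Bv with hφ
    have hφu : ∀ j : ℕ, 1 ≤ j → j ≤ m → ⟪φ, u j⟫ = 0 := by
      intro j h1 h2
      have hj : j ∈ I := Finset.mem_Icc.mpr ⟨h1, h2⟩
      rw [← inner_conj_symm, hPorth Bv j hj, map_zero]
    -- ⟪ψ, φ⟫ = ⟪φ, A φ⟫ - lam i * ‖φ‖²
    have hψφ : (⟪ψ, φ⟫ : ℂ) = ⟪φ, A φ⟫ - ((lam i : ℝ) : ℂ) * ((‖φ‖ : ℂ) ^ 2) := by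
      have e0 : (⟪ψ, φ⟫ : ℂ) = ⟪Tv, φ⟫ := by
        rw [hψ, inner_sub_left, hPorth' Bv Tv, sub_zero]
      have e1 : (⟪Tv, φ⟫ : ℂ) = ⟪A Bv, φ⟫ - ⟪B k (A (u i)), φ⟫ := by
        rw [hTv]
        simp only [LinearMap.sub_apply, LinearMap.comp_apply, inner_sub_left]
        rfl
      have e2 : (⟪A Bv, φ⟫ : ℂ) = ⟪φ, A φ⟫ := by
        rw [hAsymm]
        have : Bv = P Bv + φ := by rw [hφ]; abel
        rw [this, inner_add_left]
        have : (⟪P Bv, A φ⟫ : ℂ) = 0 := by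
          simp only [hPdef]
          rw [sum_inner]
          refine Finset.sum_eq_zero fun j hj => ?_
          rw [inner_smul_left, ← hAsymm, heig j (hmemI hj).1, inner_smul_left,
            hPorth Bv j hj]
          ring
        rw [this, zero_add]
      have e3 : (⟪B k (A (u i)), φ⟫ : ℂ) = ((lam i : ℝ) : ℂ) * ((‖φ‖ : ℂ) ^ 2) := by
        rw [heig i (hmemI hi).1, map_smul, inner_smul_left, Complex.conj_ofReal]
        have : (⟪Bv, φ⟫ : ℂ) = (‖φ‖ : ℂ) ^ 2 := by
          have hb : Bv = P Bv + φ := by rw [hφ]; abel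
          rw [hb, inner_add_left, hPorth' Bv Bv, zero_add, inner_self_eq_norm_sq_to_K]
          norm_cast
        rw [← hBv, this]
      rw [e0, e1, e2, e3]
    have hδi : 0 < lam (m + 1) - lam i := hδ i hi
    have hlow : (lam (m + 1) - lam i) * ‖φ‖ ^ 2 ≤ (⟪ψ, φ⟫).re := by
      have hr := hRR φ hφu
      have hre : (⟪φ, A φ⟫ : ℂ).re = (⟪A φ, φ⟫ : ℂ).re := by
        simpa [RCLike.re_to_complex] using inner_re_symm (𝕜 := ℂ) φ (A φ)
      have : (⟪ψ, φ⟫).re = (⟪A φ, φ⟫ : ℂ).re - lam i * ‖φ‖ ^ 2 := by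
        rw [hψφ, Complex.sub_re, hre, ← Complex.ofReal_pow, ← Complex.ofReal_mul,
          Complex.ofReal_re]
      rw [this]
      nlinarith
    have hcs : (⟪ψ, φ⟫).re ≤ ‖ψ‖ * ‖φ‖ := by
      simpa [RCLike.re_to_complex] using re_inner_le_norm (𝕜 := ℂ) ψ φ
    have hψsq : ‖ψ‖ ^ 2 = ‖Tv‖ ^ 2 - ∑ j ∈ I, ‖⟪u j, Tv⟫‖ ^ 2 := by
      have := hPyth Tv
      rw [← hψ] at this
      linarith
    rw [div_sub_div_same, le_div_iff₀ hδi, ← hψsq]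
    nlinarith [mul_le_mul_of_nonneg_left hcs (le_of_lt hδi),
      mul_le_mul_of_nonneg_left hlow (le_of_lt hδi),
      sq_nonneg (‖ψ‖ - (lam (m + 1) - lam i) * ‖φ‖)]
  -- conjugate symmetry of coefficients
  have hswap : ∀ (k : Fin N) (i j : ℕ), 1 ≤ i → 1 ≤ j →
      ‖⟪u j, B k (u i)⟫‖ = ‖⟪u i, B k (u j)⟫‖ := by
    intro k i j hi hj
    rw [← hBsymm k (u i) (u j), ← inner_conj_symm]
    exact RCLike.norm_conj _
  -- the antisymmetric double sum vanishes
  have hzero : ∑ i ∈ I, ∑ k : Fin N, ∑ j ∈ I, (lam j - lam i) * ‖⟪u j, B k (u i)⟫‖ ^ 2 = 0 := by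
    have h1 : ∑ i ∈ I, ∑ k : Fin N, ∑ j ∈ I, (lam j - lam i) * ‖⟪u j, B k (u i)⟫‖ ^ 2
        = ∑ i ∈ I, ∑ j ∈ I, ∑ k : Fin N, (lam j - lam i) * ‖⟪u j, B k (u i)⟫‖ ^ 2 := by
      refine Finset.sum_congr rfl fun i _ => ?_
      exact Finset.sum_comm
    have h2 : ∑ i ∈ I, ∑ j ∈ I, ∑ k : Fin N, (lam j - lam i) * ‖⟪u j, B k (u i)⟫‖ ^ 2
        = - ∑ i ∈ I, ∑ j ∈ I, ∑ k : Fin N, (lam j - lam i) * ‖⟪u j, B k (u i)⟫‖ ^ 2 := by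
      conv_lhs => rw [Finset.sum_comm]
      rw [← Finset.sum_neg_distrib]
      refine Finset.sum_congr rfl fun a ha => ?_
      rw [← Finset.sum_neg_distrib]
      refine Finset.sum_congr rfl fun b hb => ?_
      rw [← Finset.sum_neg_distrib]
      refine Finset.sum_congr rfl fun k _ => ?_
      rw [hswap k b a (hmemI hb).1 (hmemI ha).1]
      ring
    rw [h1]
    linarith [h2]
  -- final assembly
  have step1 : ∑ i ∈ I, (∑ k : Fin N, (⟪(A ∘ₗ B k - B k ∘ₗ A) (u i), B k (u i)⟫).re)
      ≤ (∑ i ∈ I, ∑ k : Fin N, ∑ j ∈ I, (lam j - lam i) * ‖⟪u j, B k (u i)⟫‖ ^ 2)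
        + ∑ i ∈ I, ∑ k : Fin N,
            (‖(A ∘ₗ B k - B k ∘ₗ A) (u i)‖ ^ 2 / (lam (m + 1) - lam i)
              - (∑ j ∈ I, ‖⟪u j, (A ∘ₗ B k - B k ∘ₗ A) (u i)⟫‖ ^ 2) / (lam (m + 1) - lam i)) := by
    rw [← Finset.sum_add_distrib]
    refine Finset.sum_le_sum fun i hi => ?_
    rw [← Finset.sum_add_distrib]
    refine Finset.sum_le_sum fun k _ => ?_
    rw [hsplit i hi k]
    exact add_le_add_right (hmid i hi k) _
  have step2 : ∑ i ∈ I, ∑ k : Fin N,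
      (‖(A ∘ₗ B k - B k ∘ₗ A) (u i)‖ ^ 2 / (lam (m + 1) - lam i)
        - (∑ j ∈ I, ‖⟪u j, (A ∘ₗ B k - B k ∘ₗ A) (u i)⟫‖ ^ 2) / (lam (m + 1) - lam i))
      ≤ ∑ i ∈ I, (∑ k : Fin N, ‖(A ∘ₗ B k - B k ∘ₗ A) (u i)‖ ^ 2) / (lam (m + 1) - lam i) := by
    refine Finset.sum_le_sum fun i hi => ?_
    rw [Finset.sum_div]
    refine Finset.sum_le_sum fun k _ => ?_
    have h0 : 0 ≤ (∑ j ∈ I, ‖⟪u j, (A ∘ₗ B k - B k ∘ₗ A) (u i)⟫‖ ^ 2) / (lam (m + 1) - lam i) :=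
      div_nonneg (Finset.sum_nonneg fun j _ => sq_nonneg _) (le_of_lt (hδ i hi))
    linarith
  calc ∑ i ∈ I, (∑ k : Fin N, (⟪(A ∘ₗ B k - B k ∘ₗ A) (u i), B k (u i)⟫).re)
      ≤ _ := step1
    _ = ∑ i ∈ I, ∑ k : Fin N,
          (‖(A ∘ₗ B k - B k ∘ₗ A) (u i)‖ ^ 2 / (lam (m + 1) - lam i)
            - (∑ j ∈ I, ‖⟪u j, (A ∘ₗ B k - B k ∘ₗ A) (u i)⟫‖ ^ 2) / (lam (m + 1) - lam i)) := by
        rw [hzero, zero_add]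
    _ ≤ _ := step2
end

section
/- Under the stated abstract setting, Σ_{i=1}^m (λ_{m+1} − λ_i)² ρ_i ≤ Σ_{i=1}^m (λ_{m+1} − λ_i) Λ_i. -/
open scoped ComplexInnerProductSpace
open Finset

lemma expandAux {H : Type*} [NormedAddCommGroup H] [InnerProductSpace ℂ H]
    (S : Finset ℕ) (u : ℕ → H)
    (orth : ∀ j ∈ S, ∀ j' ∈ S, ⟪u j, u j'⟫ = if j = j' then 1 else 0)
    (x y : H) (f g : ℕ → ℂ)
    (hx : ∀ j ∈ S, ⟪x, u j⟫ = 0) (hy : ∀ j ∈ S, ⟪u j, y⟫ = 0) :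
    ⟪x + ∑ j ∈ S, f j • u j, y + ∑ j ∈ S, g j • u j⟫
      = ⟪x, y⟫ + ∑ j ∈ S, (starRingEnd ℂ) (f j) * g j := by
  rw [inner_add_left, inner_add_right, inner_add_right]
  have h1 : ⟪x, ∑ j ∈ S, g j • u j⟫ = 0 := by
    rw [inner_sum]
    refine Finset.sum_eq_zero fun j hj => ?_
    rw [inner_smul_right, hx j hj, mul_zero]
  have h2 : ⟪∑ j ∈ S, f j • u j, y⟫ = 0 := by
    rw [sum_inner]
    refine Finset.sum_eq_zero fun j hj => ?_
    rw [inner_smul_left, hy j hj, mul_zero]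
  have h3 : ⟪∑ j ∈ S, f j • u j, ∑ j ∈ S, g j • u j⟫
      = ∑ j ∈ S, (starRingEnd ℂ) (f j) * g j := by
    rw [sum_inner]
    refine Finset.sum_congr rfl fun j hj => ?_
    rw [inner_smul_left, inner_sum]
    simp_rw [inner_smul_right]
    have : ∀ j' ∈ S, g j' * ⟪u j, u j'⟫ = if j = j' then g j' else 0 := by
      intro j' hj'
      rw [orth j hj j' hj']
      split <;> simp
    rw [Finset.sum_congr rfl this, Finset.sum_ite_eq _ j g]
    simp [hj, mul_comm]
  rw [h1, h2, h3]; ring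

lemma numAux {δ n r s : ℝ} (hδ : 0 ≤ δ) (hn : 0 ≤ n) (hs : 0 ≤ s) (h1 : δ * n ≤ r) (h2 : r^2 ≤ s * n) :
    δ^2 * r ≤ δ * s := by
  rcases eq_or_lt_of_le hn with h | h
  · have hr : r = 0 := by nlinarith
    nlinarith
  · have hr : 0 ≤ r := le_trans (by positivity) h1
    have : δ * r * n ≤ s * n := by nlinarith
    have := le_of_mul_le_mul_right this h
    nlinarith

lemma mainAux
    {H : Type*} [NormedAddCommGroup H] [InnerProductSpace ℂ H]
    (A : H →ₗ[ℂ] H)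
    (hAsymm : ∀ x y : H, ⟪A x, y⟫ = ⟪x, A y⟫)
    (u : ℕ → H) (lam : ℕ → ℝ)
    (huon : ∀ i j : ℕ, 1 ≤ i → 1 ≤ j → ⟪u i, u j⟫ = if i = j then 1 else 0)
    (hmono : ∀ i j : ℕ, 1 ≤ i → i ≤ j → lam i ≤ lam j)
    (heig : ∀ i : ℕ, 1 ≤ i → A (u i) = (lam i : ℂ) • u i)
    (m : ℕ)
    (hRR : ∀ φ : H, (∀ j : ℕ, 1 ≤ j → j ≤ m → ⟪φ, u j⟫ = 0) →
      lam (m + 1) * ‖φ‖ ^ 2 ≤ (⟪A φ, φ⟫).re)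
    (Bk : H →ₗ[ℂ] H)
    (i : ℕ) (hi1 : 1 ≤ i) (him : i ≤ m) :
    ∃ r s : ℝ,
      ((⟪(A ∘ₗ Bk - Bk ∘ₗ A) (u i), Bk (u i)⟫ : ℂ).re
        = r + ∑ j ∈ Finset.Icc 1 m, (lam j - lam i) * ‖(⟪u j, Bk (u i)⟫ : ℂ)‖^2) ∧
      (‖(A ∘ₗ Bk - Bk ∘ₗ A) (u i)‖^2
        = s + ∑ j ∈ Finset.Icc 1 m, (lam j - lam i)^2 * ‖(⟪u j, Bk (u i)⟫ : ℂ)‖^2) ∧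
      (lam (m+1) - lam i)^2 * r ≤ (lam (m+1) - lam i) * s := by
  set S := Finset.Icc 1 m with hS
  set v := Bk (u i) with hvdef
  set a : ℕ → ℂ := fun j => ⟪u j, v⟫ with ha
  set φ := v - ∑ j ∈ S, a j • u j with hφdef
  set ψ := A φ - (lam i : ℂ) • φ with hψdef
  set f : ℕ → ℂ := fun j => ((lam j - lam i : ℝ) : ℂ) * a j with hf
  have horth : ∀ j ∈ S, ∀ j' ∈ S, ⟪u j, u j'⟫ = if j = j' then 1 else 0 := by
    intro j hj j' hj'
    exact huon j j' (mem_Icc.mp hj).1 (mem_Icc.mp hj').1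
  -- φ is orthogonal to u j, j ∈ S
  have hprojφ : ∀ j ∈ S, ⟪u j, φ⟫ = 0 := by
    intro j hj
    rw [hφdef, inner_sub_right, inner_sum]
    simp_rw [inner_smul_right]
    have : ∀ j' ∈ S, a j' * ⟪u j, u j'⟫ = if j = j' then a j' else 0 := by
      intro j' hj'
      rw [horth j hj j' hj']
      split <;> simp
    rw [Finset.sum_congr rfl this, Finset.sum_ite_eq _ j a]
    simp [hj]
    exact sub_self _
  have hφperp : ∀ j : ℕ, 1 ≤ j → j ≤ m → ⟪φ, u j⟫ = 0 := by
    intro j h1 h2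
    have := hprojφ j (mem_Icc.mpr ⟨h1, h2⟩)
    rw [← inner_conj_symm, this, map_zero]
  have hψperp : ∀ j ∈ S, ⟪ψ, u j⟫ = 0 := by
    intro j hj
    obtain ⟨hj1, hj2⟩ := mem_Icc.mp hj
    rw [hψdef, inner_sub_left, inner_smul_left, hAsymm, heig j hj1, inner_smul_right,
      hφperp j hj1 hj2, mul_zero, mul_zero, sub_zero]
  have hψperp' : ∀ j ∈ S, ⟪u j, ψ⟫ = 0 := by
    intro j hj
    rw [← inner_conj_symm, hψperp j hj, map_zero]
  have hv : v = φ + ∑ j ∈ S, a j • u j := by rw [hφdef, sub_add_cancel]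
  -- the commutator applied to u i
  have hcom : (A ∘ₗ Bk - Bk ∘ₗ A) (u i) = A v - (lam i : ℂ) • v := by
    simp [LinearMap.sub_apply, LinearMap.comp_apply, heig i hi1, map_smul]
    rfl
  have hψeq : ψ = (A v - (lam i : ℂ) • v) - ∑ j ∈ S, f j • u j := by
    have hAφ : A φ = A v - ∑ j ∈ S, ((lam j : ℂ) * a j) • u j := by
      rw [hφdef, map_sub, map_sum]
      congr 1
      refine Finset.sum_congr rfl fun j hj => ?_
      rw [map_smul, heig j (mem_Icc.mp hj).1, smul_smul, mul_comm]
    have hsmul : (lam i : ℂ) • φ = (lam i : ℂ) • v - ∑ j ∈ S, ((lam i : ℂ) * a j) • u j := by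
      rw [hφdef, smul_sub, Finset.smul_sum]
      simp_rw [smul_smul]
    have hfkey : ∑ j ∈ S, f j • u j
        = (∑ j ∈ S, ((lam j : ℂ) * a j) • u j) - ∑ j ∈ S, ((lam i : ℂ) * a j) • u j := by
      rw [← Finset.sum_sub_distrib]
      refine Finset.sum_congr rfl fun j hj => ?_
      rw [← sub_smul]
      congr 1
      rw [hf]
      push_cast
      ring
    rw [hψdef, hAφ, hsmul, hfkey]
    abel
  have hw : (A ∘ₗ Bk - Bk ∘ₗ A) (u i) = ψ + ∑ j ∈ S, f j • u j := by
    rw [hcom, hψeq]; abel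
  refine ⟨(⟪ψ, φ⟫ : ℂ).re, ‖ψ‖^2, ?_, ?_, ?_⟩
  · -- first identity
    have hE := expandAux S u horth ψ φ f a hψperp hprojφ
    rw [hw]
    nth_rewrite 1 [hv]
    rw [hE, Complex.add_re]
    congr 1
    rw [Complex.re_sum]
    refine Finset.sum_congr rfl fun j hj => ?_
    rw [hf]
    rw [map_mul, Complex.conj_ofReal, mul_assoc, Complex.conj_mul']
    rw [show ((‖a j‖:ℂ)^2) = ((‖a j‖^2 : ℝ) : ℂ) by push_cast; ring,
      ← Complex.ofReal_mul, Complex.ofReal_re]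
  · -- second identity
    have hE := expandAux S u horth ψ ψ f f hψperp hψperp'
    have hww : (⟪(A ∘ₗ Bk - Bk ∘ₗ A) (u i), (A ∘ₗ Bk - Bk ∘ₗ A) (u i)⟫ : ℂ)
        = ⟪ψ, ψ⟫ + ∑ j ∈ S, (starRingEnd ℂ) (f j) * f j := by
      rw [hw]; exact hE
    have hn1 : ‖(A ∘ₗ Bk - Bk ∘ₗ A) (u i)‖^2
        = (⟪(A ∘ₗ Bk - Bk ∘ₗ A) (u i), (A ∘ₗ Bk - Bk ∘ₗ A) (u i)⟫ : ℂ).re := by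
      rw [@inner_self_eq_norm_sq_to_K ℂ]; norm_cast
    rw [hn1, hww, Complex.add_re, Complex.re_sum]
    congr 1
    · rw [@inner_self_eq_norm_sq_to_K ℂ]; norm_cast
    refine Finset.sum_congr rfl fun j hj => ?_
    have h2 : ((starRingEnd ℂ) (f j) * f j).re = ‖f j‖^2 := by
      rw [Complex.conj_mul']; norm_cast
    rw [h2, hf]
    simp only [norm_mul, Complex.norm_real, mul_pow, Real.norm_eq_abs, sq_abs]
    rfl
  · -- the inequality
    have hδ : 0 ≤ lam (m+1) - lam i :=
      sub_nonneg.mpr (hmono i (m+1) hi1 (him.trans (Nat.le_succ m)))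
    refine numAux hδ (n := ‖φ‖^2) (by positivity) (by positivity) ?_ ?_
    · have hre : (⟪ψ, φ⟫ : ℂ).re = (⟪A φ, φ⟫ : ℂ).re - lam i * ‖φ‖^2 := by
        rw [hψdef, inner_sub_left, Complex.sub_re, inner_smul_left, Complex.conj_ofReal]
        rw [Complex.re_ofReal_mul]
        congr 1
        rw [@inner_self_eq_norm_sq_to_K ℂ]
        norm_cast
      have := hRR φ hφperp
      rw [hre]
      nlinarith
    · have hcs : ‖(⟪ψ, φ⟫ : ℂ)‖ ≤ ‖ψ‖ * ‖φ‖ := norm_inner_le_norm ψ φ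
      have habs : |(⟪ψ, φ⟫ : ℂ).re| ≤ ‖(⟪ψ, φ⟫ : ℂ)‖ := Complex.abs_re_le_norm _
      nlinarith [norm_nonneg ψ, norm_nonneg φ, abs_nonneg (⟪ψ, φ⟫ : ℂ).re,
        sq_abs (⟪ψ, φ⟫ : ℂ).re, norm_nonneg (⟪ψ, φ⟫ : ℂ)]

open Finset in
lemma antisymAux (S : Finset ℕ) (g : ℕ → ℕ → ℝ)
    (h : ∀ i ∈ S, ∀ j ∈ S, g i j + g j i = 0) :
    ∑ i ∈ S, ∑ j ∈ S, g i j = 0 := by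
  have h2 : (∑ i ∈ S, ∑ j ∈ S, g i j) + (∑ i ∈ S, ∑ j ∈ S, g i j) = 0 := by
    nth_rewrite 2 [Finset.sum_comm]
    rw [← Finset.sum_add_distrib]
    refine Finset.sum_eq_zero fun i hi => ?_
    rw [← Finset.sum_add_distrib]
    exact Finset.sum_eq_zero fun j hj => h i hi j hj
  linarith

theorem stmt2
    {H : Type*} [NormedAddCommGroup H] [InnerProductSpace ℂ H] [CompleteSpace H]
    (A : H →ₗ[ℂ] H)
    (hAsymm : ∀ x y : H, ⟪A x, y⟫ = ⟪x, A y⟫)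
    (u : ℕ → H) (lam : ℕ → ℝ)
    (huon : ∀ i j : ℕ, 1 ≤ i → 1 ≤ j → ⟪u i, u j⟫ = if i = j then 1 else 0)
    (hmono : ∀ i j : ℕ, 1 ≤ i → i ≤ j → lam i ≤ lam j)
    (heig : ∀ i : ℕ, 1 ≤ i → A (u i) = (lam i : ℂ) • u i)
    (N : ℕ) (hN : 1 ≤ N)
    (B : Fin N → H →ₗ[ℂ] H)
    (hBsymm : ∀ (k : Fin N) (x y : H), ⟪B k x, y⟫ = ⟪x, B k y⟫)
    (m : ℕ) (hm : 1 ≤ m)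
    (hRR : ∀ φ : H, (∀ j : ℕ, 1 ≤ j → j ≤ m → ⟪φ, u j⟫ = 0) →
      lam (m + 1) * ‖φ‖ ^ 2 ≤ (⟪A φ, φ⟫).re)
 :
    ∑ i ∈ Finset.Icc 1 m, (lam (m + 1) - lam i) ^ 2 * (∑ k : Fin N, (⟪(A ∘ₗ B k - B k ∘ₗ A) (u i), B k (u i)⟫).re)
      ≤ ∑ i ∈ Finset.Icc 1 m, (lam (m + 1) - lam i) * (∑ k : Fin N, ‖(A ∘ₗ B k - B k ∘ₗ A) (u i)‖ ^ 2) := by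
  classical
  have haux : ∀ i, 1 ≤ i → i ≤ m → ∀ k : Fin N, ∃ r s : ℝ,
      ((⟪(A ∘ₗ B k - B k ∘ₗ A) (u i), B k (u i)⟫ : ℂ).re
        = r + ∑ j ∈ Finset.Icc 1 m, (lam j - lam i) * ‖(⟪u j, B k (u i)⟫ : ℂ)‖^2) ∧
      (‖(A ∘ₗ B k - B k ∘ₗ A) (u i)‖^2
        = s + ∑ j ∈ Finset.Icc 1 m, (lam j - lam i)^2 * ‖(⟪u j, B k (u i)⟫ : ℂ)‖^2) ∧
      (lam (m+1) - lam i)^2 * r ≤ (lam (m+1) - lam i) * s :=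
    fun i h1 h2 k => mainAux A hAsymm u lam huon hmono heig m hRR (B k) i h1 h2
  choose! r s hre hnorm hineq using haux
  set S := Finset.Icc 1 m with hS
  have csymm : ∀ i ∈ S, ∀ j ∈ S, ∀ k : Fin N,
      ‖(⟪u i, B k (u j)⟫ : ℂ)‖ = ‖(⟪u j, B k (u i)⟫ : ℂ)‖ := by
    intro i _ j _ k
    rw [← hBsymm k (u i) (u j), ← inner_conj_symm]
    exact RCLike.norm_conj _
  have hL : ∀ i ∈ S, (lam (m+1) - lam i)^2 * (∑ k : Fin N, (⟪(A ∘ₗ B k - B k ∘ₗ A) (u i), B k (u i)⟫ : ℂ).re)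
      = (∑ k : Fin N, (lam (m+1) - lam i)^2 * r i k)
        + ∑ j ∈ S, ∑ k : Fin N, (lam (m+1) - lam i)^2 * ((lam j - lam i) * ‖(⟪u j, B k (u i)⟫ : ℂ)‖^2) := by
    intro i hi
    obtain ⟨h1, h2⟩ := Finset.mem_Icc.mp hi
    rw [Finset.sum_congr rfl (fun k _ => hre i h1 h2 k), Finset.sum_add_distrib, mul_add,
      Finset.mul_sum]
    congr 1
    rw [Finset.mul_sum]
    simp_rw [Finset.mul_sum]
    exact Finset.sum_comm
  have hR : ∀ i ∈ S, (lam (m+1) - lam i) * (∑ k : Fin N, ‖(A ∘ₗ B k - B k ∘ₗ A) (u i)‖^2)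
      = (∑ k : Fin N, (lam (m+1) - lam i) * s i k)
        + ∑ j ∈ S, ∑ k : Fin N, (lam (m+1) - lam i) * ((lam j - lam i)^2 * ‖(⟪u j, B k (u i)⟫ : ℂ)‖^2) := by
    intro i hi
    obtain ⟨h1, h2⟩ := Finset.mem_Icc.mp hi
    rw [Finset.sum_congr rfl (fun k _ => hnorm i h1 h2 k), Finset.sum_add_distrib, mul_add,
      Finset.mul_sum]
    congr 1
    rw [Finset.mul_sum]
    simp_rw [Finset.mul_sum]
    exact Finset.sum_comm
  rw [Finset.sum_congr rfl hL, Finset.sum_congr rfl hR, Finset.sum_add_distrib,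
    Finset.sum_add_distrib]
  have hzero : ∑ i ∈ S, ∑ j ∈ S,
      ((∑ k : Fin N, (lam (m+1) - lam i)^2 * ((lam j - lam i) * ‖(⟪u j, B k (u i)⟫ : ℂ)‖^2))
        - (∑ k : Fin N, (lam (m+1) - lam i) * ((lam j - lam i)^2 * ‖(⟪u j, B k (u i)⟫ : ℂ)‖^2))) = 0 := by
    refine antisymAux S _ ?_
    intro i hi j hj
    rw [← Finset.sum_sub_distrib, ← Finset.sum_sub_distrib, ← Finset.sum_add_distrib]
    refine Finset.sum_eq_zero fun k _ => ?_
    rw [csymm i hi j hj k]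
    ring
  have heq : ∑ i ∈ S, ∑ j ∈ S, ∑ k : Fin N,
        (lam (m+1) - lam i)^2 * ((lam j - lam i) * ‖(⟪u j, B k (u i)⟫ : ℂ)‖^2)
      = ∑ i ∈ S, ∑ j ∈ S, ∑ k : Fin N,
        (lam (m+1) - lam i) * ((lam j - lam i)^2 * ‖(⟪u j, B k (u i)⟫ : ℂ)‖^2) := by
    have := hzero
    simp_rw [Finset.sum_sub_distrib] at this
    linarith
  have hle : ∑ i ∈ S, ∑ k : Fin N, (lam (m+1) - lam i)^2 * r i k
      ≤ ∑ i ∈ S, ∑ k : Fin N, (lam (m+1) - lam i) * s i k := by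
    refine Finset.sum_le_sum fun i hi => ?_
    obtain ⟨h1, h2⟩ := Finset.mem_Icc.mp hi
    exact Finset.sum_le_sum fun k _ => hineq i h1 h2 k
  linarith
end

section
/- Under the stated abstract setting, let g : ℝ → ℝ satisfy g(λ_i) ≥ 0 for every i ∈ {1, …, m} and g(λ_i) ≤ g(λ_j) whenever 1 ≤ i ≤ j ≤ m (g is nonnegative and nondecreasing on the eigenvalues λ_1, …, λ_m). Then Σ_{i=1}^m (λ_{m+1} − λ_i)² g(λ_i) ρ_i ≤ Σ_{i=1}^m (λ_{m+1} − λ_i) g(λ_i) Λ_i. -/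
open scoped ComplexInnerProductSpace
open Finset

section Aux

variable {H : Type*} [NormedAddCommGroup H] [InnerProductSpace ℂ H]

private lemma aux_horth (u : ℕ → H)
    (huon : ∀ i j : ℕ, 1 ≤ i → 1 ≤ j → ⟪u i, u j⟫ = if i = j then 1 else 0)
    (m : ℕ) (c : ℕ → ℂ) {j : ℕ} (hj : j ∈ Finset.Icc 1 m) :
    ⟪u j, ∑ j' ∈ Finset.Icc 1 m, c j' • u j'⟫ = c j := by
  rw [inner_sum]
  simp only [inner_smul_right]
  rw [Finset.sum_eq_single j]
  · rw [huon j j (mem_Icc.mp hj).1 (mem_Icc.mp hj).1]; simp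
  · intro b hb hbj
    rw [huon j b (mem_Icc.mp hj).1 (mem_Icc.mp hb).1, if_neg (fun h => hbj h.symm), mul_zero]
  · intro h; exact absurd hj h

private lemma aux_normsum (u : ℕ → H)
    (huon : ∀ i j : ℕ, 1 ≤ i → 1 ≤ j → ⟪u i, u j⟫ = if i = j then 1 else 0)
    (m : ℕ) (c : ℕ → ℂ) :
    ‖∑ j ∈ Finset.Icc 1 m, c j • u j‖ ^ 2 = ∑ j ∈ Finset.Icc 1 m, ‖c j‖ ^ 2 := by
  have h : ⟪∑ j ∈ Finset.Icc 1 m, c j • u j, ∑ j ∈ Finset.Icc 1 m, c j • u j⟫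
      = ((∑ j ∈ Finset.Icc 1 m, ‖c j‖ ^ 2 : ℝ) : ℂ) := by
    rw [sum_inner]
    simp only [inner_smul_left]
    push_cast
    refine Finset.sum_congr rfl fun j hj => ?_
    rw [aux_horth u huon m c hj, RCLike.conj_mul]
    norm_cast
  have h2 := inner_self_eq_norm_sq_to_K (𝕜 := ℂ) (∑ j ∈ Finset.Icc 1 m, c j • u j)
  rw [h] at h2
  norm_cast at h2
  exact RCLike.ofReal_injective (K := ℂ) h2.symm

private lemma aux_pyth (u : ℕ → H)
    (huon : ∀ i j : ℕ, 1 ≤ i → 1 ≤ j → ⟪u i, u j⟫ = if i = j then 1 else 0)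
    (m : ℕ) (c : ℕ → ℂ) (z : H)
    (hz : ∀ j ∈ Finset.Icc 1 m, ⟪u j, z⟫ = 0) :
    ‖(∑ j ∈ Finset.Icc 1 m, c j • u j) + z‖ ^ 2
      = (∑ j ∈ Finset.Icc 1 m, ‖c j‖ ^ 2) + ‖z‖ ^ 2 := by
  have h0 : ⟪∑ j ∈ Finset.Icc 1 m, c j • u j, z⟫ = 0 := by
    rw [sum_inner]
    exact Finset.sum_eq_zero fun j hj => by rw [inner_smul_left, hz j hj, mul_zero]
  rw [norm_add_sq (𝕜 := ℂ), h0, aux_normsum u huon m c]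
  simp

private lemma aux_key (A : H →ₗ[ℂ] H)
    (hAsymm : ∀ x y : H, ⟪A x, y⟫ = ⟪x, A y⟫)
    (u : ℕ → H) (lam : ℕ → ℝ)
    (huon : ∀ i j : ℕ, 1 ≤ i → 1 ≤ j → ⟪u i, u j⟫ = if i = j then 1 else 0)
    (heig : ∀ i : ℕ, 1 ≤ i → A (u i) = (lam i : ℂ) • u i)
    (m : ℕ)
    (hRR : ∀ φ : H, (∀ j : ℕ, 1 ≤ j → j ≤ m → ⟪φ, u j⟫ = 0) →
      lam (m + 1) * ‖φ‖ ^ 2 ≤ (⟪A φ, φ⟫).re)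
    (B : H →ₗ[ℂ] H) (i : ℕ) (hi : i ∈ Finset.Icc 1 m) (hδ : 0 ≤ lam (m + 1) - lam i) :
    (lam (m + 1) - lam i) ^ 2 * (⟪(A ∘ₗ B - B ∘ₗ A) (u i), B (u i)⟫).re
      ≤ (lam (m + 1) - lam i) * ‖(A ∘ₗ B - B ∘ₗ A) (u i)‖ ^ 2
        + ∑ j ∈ Finset.Icc 1 m,
            (lam (m + 1) - lam i) * (lam j - lam i) * (lam (m + 1) - lam j)
              * ‖⟪u j, B (u i)⟫‖ ^ 2 := by
  obtain ⟨hi1, him⟩ := mem_Icc.mp hi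
  set v := B (u i) with hv
  set Tu := (A ∘ₗ B - B ∘ₗ A) (u i) with hTudef
  set a : ℕ → ℂ := fun j => ⟪u j, v⟫ with ha
  set P := ∑ j ∈ Finset.Icc 1 m, a j • u j with hP
  set φ := v - P with hφdef
  set c : ℕ → ℂ := fun j => ((lam j - lam i : ℝ) : ℂ) * a j with hc
  set w := Tu - ∑ j ∈ Finset.Icc 1 m, c j • u j with hw
  have hTu2 : Tu = A v - (lam i : ℂ) • v := by
    rw [hTudef, LinearMap.sub_apply, LinearMap.comp_apply, LinearMap.comp_apply,
      heig i hi1, map_smul, hv]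
  have hφu : ∀ j ∈ Finset.Icc 1 m, ⟪u j, φ⟫ = 0 := by
    intro j hj
    rw [hφdef, inner_sub_right, hP, aux_horth u huon m a hj]
    simp [ha]
  have hφu' : ∀ j : ℕ, 1 ≤ j → j ≤ m → ⟪φ, u j⟫ = 0 := by
    intro j h1 h2
    have h3 := hφu j (mem_Icc.mpr ⟨h1, h2⟩)
    rw [← inner_conj_symm, h3, map_zero]
  have hvPφ : v = P + φ := by rw [hφdef]; abel
  -- coefficients of Tu
  have hTuj : ∀ j ∈ Finset.Icc 1 m, ⟪u j, Tu⟫ = c j := by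
    intro j hj
    obtain ⟨hj1, _⟩ := mem_Icc.mp hj
    rw [hTu2, inner_sub_right, inner_smul_right]
    rw [← hAsymm (u j) v, heig j hj1, inner_smul_left, Complex.conj_ofReal]
    simp only [hc, ha]
    push_cast
    ring
  have hworth : ∀ j ∈ Finset.Icc 1 m, ⟪u j, w⟫ = 0 := by
    intro j hj
    rw [hw, inner_sub_right, hTuj j hj, aux_horth u huon m c hj, sub_self]
  have hTuw : Tu = (∑ j ∈ Finset.Icc 1 m, c j • u j) + w := by rw [hw]; abel
  -- Pythagoras for Tu
  have hnT : ‖Tu‖ ^ 2 = (∑ j ∈ Finset.Icc 1 m, (lam j - lam i) ^ 2 * ‖a j‖ ^ 2) + ‖w‖ ^ 2 := by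
    rw [hTuw, aux_pyth u huon m c w hworth]
    congr 1
    refine Finset.sum_congr rfl fun j hj => ?_
    rw [hc]
    rw [norm_mul, mul_pow, Complex.norm_real, Real.norm_eq_abs, sq_abs]
  -- inner product ⟪Tu, φ⟫
  have hTuφ : (⟪Tu, φ⟫).re = (⟪A φ, φ⟫).re - lam i * ‖φ‖ ^ 2 := by
    have hPφ : ⟪P, φ⟫ = 0 := by
      rw [hP, sum_inner]
      exact Finset.sum_eq_zero fun j hj => by rw [inner_smul_left, hφu j hj, mul_zero]
    have hPAφ : ⟪P, A φ⟫ = 0 := by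
      rw [hP, sum_inner]
      refine Finset.sum_eq_zero fun j hj => ?_
      obtain ⟨hj1, _⟩ := mem_Icc.mp hj
      rw [inner_smul_left, ← hAsymm (u j) φ, heig j hj1, inner_smul_left, hφu j hj,
        mul_zero, mul_zero]
    have h1 : ⟪Tu, φ⟫ = ⟪φ, A φ⟫ - ((lam i : ℝ) : ℂ) * ⟪φ, φ⟫ := by
      rw [hTu2, inner_sub_left, inner_smul_left, Complex.conj_ofReal]
      rw [hAsymm v φ]
      conv_lhs => rw [hvPφ]
      rw [inner_add_left, inner_add_left, hPAφ, hPφ]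
      ring
    have h2 : (⟪φ, A φ⟫).re = (⟪A φ, φ⟫).re := by
      rw [← inner_conj_symm]; exact Complex.conj_re _
    have h3 : (⟪φ, φ⟫).re = ‖φ‖ ^ 2 := by
      rw [← RCLike.re_to_complex]
      exact inner_self_eq_norm_sq (𝕜 := ℂ) φ
    rw [h1, Complex.sub_re, Complex.re_ofReal_mul, h2, h3]
  -- lower bound for r
  have hrlow : (lam (m + 1) - lam i) * ‖φ‖ ^ 2 ≤ (⟪Tu, φ⟫).re := by
    have := hRR φ hφu'
    rw [hTuφ]; nlinarith [this]
  -- upper bound for r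
  have hwφ : ⟪w, φ⟫ = ⟪Tu, φ⟫ := by
    rw [hw, inner_sub_left, sum_inner]
    have : ∑ j ∈ Finset.Icc 1 m, ⟪c j • u j, φ⟫ = 0 :=
      Finset.sum_eq_zero fun j hj => by rw [inner_smul_left, hφu j hj, mul_zero]
    rw [this, sub_zero]
  have hrup : (⟪Tu, φ⟫).re ≤ ‖w‖ * ‖φ‖ := by
    rw [← hwφ]
    refine le_trans ?_ (norm_inner_le_norm (𝕜 := ℂ) w φ)
    exact Complex.re_le_norm _
  -- the scalar inequality
  have hr0 : 0 ≤ (⟪Tu, φ⟫).re := le_trans (by positivity) hrlow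
  have hscal : (lam (m + 1) - lam i) ^ 2 * (⟪Tu, φ⟫).re
      ≤ (lam (m + 1) - lam i) * ‖w‖ ^ 2 := by
    set δ := lam (m + 1) - lam i
    set r := (⟪Tu, φ⟫).re
    rcases eq_or_lt_of_le hr0 with h | h
    · rw [← h, mul_zero]; positivity
    · have e1 : r * r ≤ (‖w‖ * ‖φ‖) * (‖w‖ * ‖φ‖) :=
        mul_le_mul hrup hrup hr0 (by positivity)
      have e2 : δ ^ 2 * (r * r) ≤ (δ * ‖w‖ ^ 2) * r := by
        nlinarith [mul_le_mul_of_nonneg_left hrlow hδ, sq_nonneg ‖w‖,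
          mul_nonneg hδ (sq_nonneg ‖w‖), norm_nonneg w, norm_nonneg φ]
      have := le_of_mul_le_mul_right (by nlinarith [e2] : (δ ^ 2 * r) * r ≤ (δ * ‖w‖ ^ 2) * r) h
      exact this
  -- decomposition of ρ
  have hTuP : (⟪Tu, P⟫).re = ∑ j ∈ Finset.Icc 1 m, (lam j - lam i) * ‖a j‖ ^ 2 := by
    have h1 : ⟪Tu, P⟫ = ((∑ j ∈ Finset.Icc 1 m, (lam j - lam i) * ‖a j‖ ^ 2 : ℝ) : ℂ) := by
      have habs : ∀ (x z : ℂ), z * (x * (starRingEnd ℂ) z) = x * ((‖z‖ ^ 2 : ℝ) : ℂ) := by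
        intro x z
        rw [mul_left_comm, Complex.mul_conj, Complex.normSq_eq_norm_sq]
      rw [hP, inner_sum]
      push_cast
      refine Finset.sum_congr rfl fun j hj => ?_
      have h2 : ⟪Tu, u j⟫ = (starRingEnd ℂ) (c j) := by
        rw [← inner_conj_symm, hTuj j hj]
      rw [inner_smul_right, h2, hc, map_mul, Complex.conj_ofReal, habs]
      push_cast
      ring
    rw [h1, Complex.ofReal_re]
  have hρ : (⟪Tu, v⟫).re
      = (∑ j ∈ Finset.Icc 1 m, (lam j - lam i) * ‖a j‖ ^ 2) + (⟪Tu, φ⟫).re := by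
    conv_lhs => rw [hvPφ]
    rw [inner_add_right, Complex.add_re, hTuP]
  -- put it together
  rw [hρ, hnT]
  have hid : (lam (m + 1) - lam i) ^ 2 * (∑ j ∈ Finset.Icc 1 m, (lam j - lam i) * ‖a j‖ ^ 2)
      = (lam (m + 1) - lam i) * (∑ j ∈ Finset.Icc 1 m, (lam j - lam i) ^ 2 * ‖a j‖ ^ 2)
        + ∑ j ∈ Finset.Icc 1 m,
            (lam (m + 1) - lam i) * (lam j - lam i) * (lam (m + 1) - lam j) * ‖a j‖ ^ 2 := by
    rw [Finset.mul_sum, Finset.mul_sum, ← Finset.sum_add_distrib]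
    exact Finset.sum_congr rfl fun j hj => by ring
  linarith [hscal, hid]

end Aux

theorem stmt3
    {H : Type*} [NormedAddCommGroup H] [InnerProductSpace ℂ H] [CompleteSpace H]
    (A : H →ₗ[ℂ] H)
    (hAsymm : ∀ x y : H, ⟪A x, y⟫ = ⟪x, A y⟫)
    (u : ℕ → H) (lam : ℕ → ℝ)
    (huon : ∀ i j : ℕ, 1 ≤ i → 1 ≤ j → ⟪u i, u j⟫ = if i = j then 1 else 0)
    (hmono : ∀ i j : ℕ, 1 ≤ i → i ≤ j → lam i ≤ lam j)
    (heig : ∀ i : ℕ, 1 ≤ i → A (u i) = (lam i : ℂ) • u i)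
    (N : ℕ) (hN : 1 ≤ N)
    (B : Fin N → H →ₗ[ℂ] H)
    (hBsymm : ∀ (k : Fin N) (x y : H), ⟪B k x, y⟫ = ⟪x, B k y⟫)
    (m : ℕ) (hm : 1 ≤ m)
    (hRR : ∀ φ : H, (∀ j : ℕ, 1 ≤ j → j ≤ m → ⟪φ, u j⟫ = 0) →
      lam (m + 1) * ‖φ‖ ^ 2 ≤ (⟪A φ, φ⟫).re)
    (g : ℝ → ℝ)
    (hg0 : ∀ i : ℕ, 1 ≤ i → i ≤ m → 0 ≤ g (lam i))
    (hgmono : ∀ i j : ℕ, 1 ≤ i → i ≤ j → j ≤ m → g (lam i) ≤ g (lam j)) :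
    ∑ i ∈ Finset.Icc 1 m, (lam (m + 1) - lam i) ^ 2 * g (lam i) * (∑ k : Fin N, (⟪(A ∘ₗ B k - B k ∘ₗ A) (u i), B k (u i)⟫).re)
      ≤ ∑ i ∈ Finset.Icc 1 m, (lam (m + 1) - lam i) * g (lam i) * (∑ k : Fin N, ‖(A ∘ₗ B k - B k ∘ₗ A) (u i)‖ ^ 2) := by
  have hC : ∀ i j : ℕ, (∑ k : Fin N, ‖⟪u j, B k (u i)⟫‖ ^ 2) = ∑ k : Fin N, ‖⟪u i, B k (u j)⟫‖ ^ 2 := by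
    intro i j
    refine Finset.sum_congr rfl fun k _ => ?_
    have h : ⟪u i, B k (u j)⟫ = (starRingEnd ℂ) ⟪u j, B k (u i)⟫ := by
      rw [← hBsymm k (u i) (u j), ← inner_conj_symm]
    rw [h, RCLike.norm_conj]
  have hδ : ∀ i ∈ Finset.Icc 1 m, 0 ≤ lam (m + 1) - lam i := by
    intro i hi
    obtain ⟨h1, h2⟩ := Finset.mem_Icc.mp hi
    have := hmono i (m + 1) h1 (le_trans h2 (Nat.le_succ m))
    linarith
  have step1 : ∀ i ∈ Finset.Icc 1 m,
      (lam (m + 1) - lam i) ^ 2 * g (lam i) * (∑ k : Fin N, (⟪(A ∘ₗ B k - B k ∘ₗ A) (u i), B k (u i)⟫).re)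
        ≤ (lam (m + 1) - lam i) * g (lam i) * (∑ k : Fin N, ‖(A ∘ₗ B k - B k ∘ₗ A) (u i)‖ ^ 2)
          + g (lam i) * ∑ j ∈ Finset.Icc 1 m,
              (lam (m + 1) - lam i) * (lam j - lam i) * (lam (m + 1) - lam j)
                * (∑ k : Fin N, ‖⟪u j, B k (u i)⟫‖ ^ 2) := by
    intro i hi
    obtain ⟨hi1, him⟩ := Finset.mem_Icc.mp hi
    have hgi := hg0 i hi1 him
    have hsum : (∑ k : Fin N, (lam (m + 1) - lam i) ^ 2 * (⟪(A ∘ₗ B k - B k ∘ₗ A) (u i), B k (u i)⟫).re)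
        ≤ (lam (m + 1) - lam i) * (∑ k : Fin N, ‖(A ∘ₗ B k - B k ∘ₗ A) (u i)‖ ^ 2)
          + ∑ j ∈ Finset.Icc 1 m,
              (lam (m + 1) - lam i) * (lam j - lam i) * (lam (m + 1) - lam j)
                * (∑ k : Fin N, ‖⟪u j, B k (u i)⟫‖ ^ 2) := by
      calc (∑ k : Fin N, (lam (m + 1) - lam i) ^ 2 * (⟪(A ∘ₗ B k - B k ∘ₗ A) (u i), B k (u i)⟫).re)
          ≤ ∑ k : Fin N, ((lam (m + 1) - lam i) * ‖(A ∘ₗ B k - B k ∘ₗ A) (u i)‖ ^ 2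
              + ∑ j ∈ Finset.Icc 1 m,
                  (lam (m + 1) - lam i) * (lam j - lam i) * (lam (m + 1) - lam j)
                    * ‖⟪u j, B k (u i)⟫‖ ^ 2) :=
            Finset.sum_le_sum fun k _ => aux_key A hAsymm u lam huon heig m hRR (B k) i hi (hδ i hi)
        _ = (lam (m + 1) - lam i) * (∑ k : Fin N, ‖(A ∘ₗ B k - B k ∘ₗ A) (u i)‖ ^ 2)
              + ∑ j ∈ Finset.Icc 1 m,
                  (lam (m + 1) - lam i) * (lam j - lam i) * (lam (m + 1) - lam j)
                    * (∑ k : Fin N, ‖⟪u j, B k (u i)⟫‖ ^ 2) := by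
            rw [Finset.sum_add_distrib, ← Finset.mul_sum, Finset.sum_comm]
            congr 1
            exact Finset.sum_congr rfl fun j hj => by rw [← Finset.mul_sum]
    calc (lam (m + 1) - lam i) ^ 2 * g (lam i) * (∑ k : Fin N, (⟪(A ∘ₗ B k - B k ∘ₗ A) (u i), B k (u i)⟫).re)
        = g (lam i) * ∑ k : Fin N, (lam (m + 1) - lam i) ^ 2 * (⟪(A ∘ₗ B k - B k ∘ₗ A) (u i), B k (u i)⟫).re := by
          rw [Finset.mul_sum, Finset.mul_sum]
          exact Finset.sum_congr rfl fun k _ => by ring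
      _ ≤ g (lam i) * ((lam (m + 1) - lam i) * (∑ k : Fin N, ‖(A ∘ₗ B k - B k ∘ₗ A) (u i)‖ ^ 2)
              + ∑ j ∈ Finset.Icc 1 m,
                  (lam (m + 1) - lam i) * (lam j - lam i) * (lam (m + 1) - lam j)
                    * (∑ k : Fin N, ‖⟪u j, B k (u i)⟫‖ ^ 2)) := mul_le_mul_of_nonneg_left hsum hgi
      _ = (lam (m + 1) - lam i) * g (lam i) * (∑ k : Fin N, ‖(A ∘ₗ B k - B k ∘ₗ A) (u i)‖ ^ 2)
          + g (lam i) * ∑ j ∈ Finset.Icc 1 m,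
              (lam (m + 1) - lam i) * (lam j - lam i) * (lam (m + 1) - lam j)
                * (∑ k : Fin N, ‖⟪u j, B k (u i)⟫‖ ^ 2) := by ring
  have total := Finset.sum_le_sum step1
  rw [Finset.sum_add_distrib] at total
  have hS : (∑ i ∈ Finset.Icc 1 m, g (lam i) * ∑ j ∈ Finset.Icc 1 m,
      (lam (m + 1) - lam i) * (lam j - lam i) * (lam (m + 1) - lam j)
        * (∑ k : Fin N, ‖⟪u j, B k (u i)⟫‖ ^ 2)) ≤ 0 := by
    set F : ℕ → ℕ → ℝ := fun i j => g (lam i) * ((lam (m + 1) - lam i) * (lam j - lam i)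
        * (lam (m + 1) - lam j) * (∑ k : Fin N, ‖⟪u j, B k (u i)⟫‖ ^ 2)) with hF
    have hrw : (∑ i ∈ Finset.Icc 1 m, g (lam i) * ∑ j ∈ Finset.Icc 1 m,
        (lam (m + 1) - lam i) * (lam j - lam i) * (lam (m + 1) - lam j)
          * (∑ k : Fin N, ‖⟪u j, B k (u i)⟫‖ ^ 2))
        = ∑ i ∈ Finset.Icc 1 m, ∑ j ∈ Finset.Icc 1 m, F i j :=
      Finset.sum_congr rfl fun i _ => by rw [Finset.mul_sum]
    rw [hrw]
    have hpair : ∀ i ∈ Finset.Icc 1 m, ∀ j ∈ Finset.Icc 1 m, F i j + F j i ≤ 0 := by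
      intro i hi j hj
      obtain ⟨hi1, him⟩ := Finset.mem_Icc.mp hi
      obtain ⟨hj1, hjm⟩ := Finset.mem_Icc.mp hj
      have hCnn : 0 ≤ ∑ k : Fin N, ‖⟪u j, B k (u i)⟫‖ ^ 2 :=
        Finset.sum_nonneg fun k _ => sq_nonneg _
      have hδi := hδ i hi
      have hδj := hδ j hj
      have hkey : F i j + F j i = ((g (lam i) - g (lam j)) * (lam j - lam i))
          * ((lam (m + 1) - lam i) * (lam (m + 1) - lam j)
            * (∑ k : Fin N, ‖⟪u j, B k (u i)⟫‖ ^ 2)) := by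
        rw [hF]
        simp only
        rw [← hC i j]
        ring
      rw [hkey]
      have hnn : 0 ≤ (lam (m + 1) - lam i) * (lam (m + 1) - lam j)
          * (∑ k : Fin N, ‖⟪u j, B k (u i)⟫‖ ^ 2) :=
        mul_nonneg (mul_nonneg hδi hδj) hCnn
      rcases le_total i j with h | h
      · have hg : g (lam i) ≤ g (lam j) := hgmono i j hi1 h hjm
        have hlam : lam i ≤ lam j := hmono i j hi1 h
        exact mul_nonpos_of_nonpos_of_nonneg
          (mul_nonpos_of_nonpos_of_nonneg (by linarith) (by linarith)) hnn
      · have hg : g (lam j) ≤ g (lam i) := hgmono j i hj1 h him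
        have hlam : lam j ≤ lam i := hmono j i hj1 h
        exact mul_nonpos_of_nonpos_of_nonneg
          (mul_nonpos_of_nonneg_of_nonpos (by linarith) (by linarith)) hnn
    have hswap : ∑ i ∈ Finset.Icc 1 m, ∑ j ∈ Finset.Icc 1 m, F j i
        = ∑ i ∈ Finset.Icc 1 m, ∑ j ∈ Finset.Icc 1 m, F i j := Finset.sum_comm
    have hdouble : (∑ i ∈ Finset.Icc 1 m, ∑ j ∈ Finset.Icc 1 m, F i j) * 2
        = ∑ i ∈ Finset.Icc 1 m, ∑ j ∈ Finset.Icc 1 m, (F i j + F j i) := by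
      calc (∑ i ∈ Finset.Icc 1 m, ∑ j ∈ Finset.Icc 1 m, F i j) * 2
          = (∑ i ∈ Finset.Icc 1 m, ∑ j ∈ Finset.Icc 1 m, F i j)
            + ∑ i ∈ Finset.Icc 1 m, ∑ j ∈ Finset.Icc 1 m, F j i := by rw [hswap]; ring
        _ = ∑ i ∈ Finset.Icc 1 m, (∑ j ∈ Finset.Icc 1 m, F i j + ∑ j ∈ Finset.Icc 1 m, F j i) := by
            rw [← Finset.sum_add_distrib]
        _ = ∑ i ∈ Finset.Icc 1 m, ∑ j ∈ Finset.Icc 1 m, (F i j + F j i) :=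
            Finset.sum_congr rfl fun i _ => by rw [← Finset.sum_add_distrib]
    have hle : ∑ i ∈ Finset.Icc 1 m, ∑ j ∈ Finset.Icc 1 m, (F i j + F j i) ≤ 0 :=
      Finset.sum_nonpos fun i hi => Finset.sum_nonpos fun j hj => hpair i hi j hj
    linarith
  linarith [total, hS]
end

section
/- Under the stated abstract setting, if λ_m < λ_{m+1}, then for every real number p ≤ 2 one has Σ_{i=1}^m (λ_{m+1} − λ_i)^p ρ_i ≤ Σ_{i=1}^m (λ_{m+1} − λ_i)^{p−1} Λ_i, where the powers are real powers of the positive numbers λ_{m+1} − λ_i. -/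
open scoped ComplexInnerProductSpace
open Finset

lemma inner_sum_sum' {H : Type*} [NormedAddCommGroup H] [InnerProductSpace ℂ H]
    (u : ℕ → H) (m : ℕ)
    (huon : ∀ i j : ℕ, 1 ≤ i → 1 ≤ j → ⟪u i, u j⟫ = if i = j then 1 else 0)
    (c d : ℕ → ℂ) :
    ⟪∑ j ∈ Icc 1 m, c j • u j, ∑ j ∈ Icc 1 m, d j • u j⟫
      = ∑ j ∈ Icc 1 m, (starRingEnd ℂ) (c j) * d j := by
  rw [sum_inner]
  refine Finset.sum_congr rfl fun j hj => ?_
  rw [inner_smul_left, inner_sum]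
  have hj1 : 1 ≤ j := (Finset.mem_Icc.mp hj).1
  have : ∑ j' ∈ Icc 1 m, ⟪u j, d j' • u j'⟫ = d j := by
    rw [Finset.sum_eq_single j]
    · rw [inner_smul_right, huon j j hj1 hj1]; simp
    · intro j' hj' hne
      rw [inner_smul_right, huon j j' hj1 (Finset.mem_Icc.mp hj').1, if_neg (fun h => hne h.symm)]
      simp
    · intro h; exact absurd hj h
  rw [this]

lemma conj_mul_self_eq (z : ℂ) : (starRingEnd ℂ) z * z = ((‖z‖^2 : ℝ) : ℂ) := by
  rw [mul_comm, Complex.mul_conj, Complex.normSq_eq_norm_sq]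

lemma aux_pointwise {H : Type*} [NormedAddCommGroup H] [InnerProductSpace ℂ H]
    (A : H →ₗ[ℂ] H)
    (hAsymm : ∀ x y : H, ⟪A x, y⟫ = ⟪x, A y⟫)
    (u : ℕ → H) (lam : ℕ → ℝ)
    (huon : ∀ i j : ℕ, 1 ≤ i → 1 ≤ j → ⟪u i, u j⟫ = if i = j then 1 else 0)
    (heig : ∀ i : ℕ, 1 ≤ i → A (u i) = (lam i : ℂ) • u i)
    (m : ℕ)
    (hRR : ∀ φ : H, (∀ j : ℕ, 1 ≤ j → j ≤ m → ⟪φ, u j⟫ = 0) →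
      lam (m + 1) * ‖φ‖ ^ 2 ≤ (⟪A φ, φ⟫).re)
    (i : ℕ) (hi1 : 1 ≤ i) (him : i ≤ m)
    (hδi : 0 ≤ lam (m+1) - lam i)
    (b : H) :
    ∃ s t : ℝ,
      (lam (m+1) - lam i) * s ≤ t ∧
      (⟪A b - (lam i : ℂ) • b, b⟫).re
        = (∑ j ∈ Icc 1 m, (lam j - lam i) * ‖⟪u j, b⟫‖^2) + s ∧
      ‖A b - (lam i : ℂ) • b‖^2
        = (∑ j ∈ Icc 1 m, (lam j - lam i)^2 * ‖⟪u j, b⟫‖^2) + t := by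
  set a : ℕ → ℂ := fun j => ⟪u j, b⟫ with ha
  set P : H := ∑ j ∈ Icc 1 m, a j • u j with hP
  set φ : H := b - P with hφdef
  set ψ : H := A φ - (lam i : ℂ) • φ with hψdef
  -- φ orthogonal to u j
  have hφu : ∀ j : ℕ, 1 ≤ j → j ≤ m → ⟪φ, u j⟫ = 0 := by
    intro j hj1 hjm
    have hPu : ⟪P, u j⟫ = (starRingEnd ℂ) (a j) := by
      rw [hP, sum_inner, Finset.sum_eq_single j]
      · rw [inner_smul_left, huon j j hj1 hj1]; simp
      · intro j' hj' hne
        rw [inner_smul_left, huon j' j (Finset.mem_Icc.mp hj').1 hj1, if_neg hne]; simp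
      · intro h; exact absurd (Finset.mem_Icc.mpr ⟨hj1, hjm⟩) h
    rw [hφdef, inner_sub_left, hPu]
    have : ⟪b, u j⟫ = (starRingEnd ℂ) (a j) := (inner_conj_symm (𝕜 := ℂ) b (u j)).symm
    rw [this, sub_self]
  have huφ : ∀ j : ℕ, 1 ≤ j → j ≤ m → ⟪u j, φ⟫ = 0 := by
    intro j hj1 hjm
    rw [← inner_conj_symm, hφu j hj1 hjm, map_zero]
  -- ψ orthogonal to u j
  have hψu : ∀ j : ℕ, 1 ≤ j → j ≤ m → ⟪ψ, u j⟫ = 0 := by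
    intro j hj1 hjm
    rw [hψdef, inner_sub_left, hAsymm, heig j hj1, inner_smul_right, inner_smul_left,
      hφu j hj1 hjm]
    simp
  have huψ : ∀ j : ℕ, 1 ≤ j → j ≤ m → ⟪u j, ψ⟫ = 0 := by
    intro j hj1 hjm
    rw [← inner_conj_symm, hψu j hj1 hjm, map_zero]
  -- decomposition of T := A b - λᵢ b
  set c : ℕ → ℂ := fun j => ((lam j : ℂ) - (lam i : ℂ)) * a j with hc
  set Q : H := ∑ j ∈ Icc 1 m, c j • u j with hQ
  have hb : b = P + φ := by rw [hφdef]; abel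
  have hT : A b - (lam i : ℂ) • b = Q + ψ := by
    have hAP : A P = ∑ j ∈ Icc 1 m, ((lam j : ℂ) * a j) • u j := by
      rw [hP, map_sum]
      refine Finset.sum_congr rfl fun j hj => ?_
      rw [map_smul, heig j (Finset.mem_Icc.mp hj).1, smul_smul, mul_comm]
    have hQ' : Q = A P - (lam i : ℂ) • P := by
      rw [hQ, hAP, hP, Finset.smul_sum, ← Finset.sum_sub_distrib]
      refine Finset.sum_congr rfl fun j hj => ?_
      rw [smul_smul, hc, ← sub_smul]; ring_nf
    rw [hQ', hψdef, hb, map_add, smul_add]; abel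
  -- orthogonality relations
  have hQφ : ⟪Q, φ⟫ = 0 := by
    rw [hQ, sum_inner]
    refine Finset.sum_eq_zero fun j hj => ?_
    obtain ⟨hj1, hjm⟩ := Finset.mem_Icc.mp hj
    rw [inner_smul_left, huφ j hj1 hjm, mul_zero]
  have hψP : ⟪ψ, P⟫ = 0 := by
    rw [hP, inner_sum]
    refine Finset.sum_eq_zero fun j hj => ?_
    obtain ⟨hj1, hjm⟩ := Finset.mem_Icc.mp hj
    rw [inner_smul_right, hψu j hj1 hjm, mul_zero]
  have hQψ : ⟪Q, ψ⟫ = 0 := by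
    rw [hQ, sum_inner]
    refine Finset.sum_eq_zero fun j hj => ?_
    obtain ⟨hj1, hjm⟩ := Finset.mem_Icc.mp hj
    rw [inner_smul_left, huψ j hj1 hjm, mul_zero]
  have hselfφ : ⟪φ, φ⟫ = ((‖φ‖^2 : ℝ) : ℂ) := by
    rw [inner_self_eq_norm_sq_to_K]; norm_cast
  refine ⟨(⟪ψ, φ⟫).re, ‖ψ‖^2, ?_, ?_, ?_⟩
  · -- key inequality
    have hW : lam (m+1) * ‖φ‖^2 ≤ (⟪A φ, φ⟫).re := hRR φ hφu
    have hsφ : (⟪ψ, φ⟫).re = (⟪A φ, φ⟫).re - lam i * ‖φ‖^2 := by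
      rw [hψdef, inner_sub_left, inner_smul_left, Complex.conj_ofReal, hselfφ,
        ← Complex.ofReal_mul, Complex.sub_re, Complex.ofReal_re]
    have hlow : (lam (m+1) - lam i) * ‖φ‖^2 ≤ (⟪ψ, φ⟫).re := by
      rw [hsφ]; nlinarith
    have hCS : (⟪ψ, φ⟫).re ≤ ‖ψ‖ * ‖φ‖ := by
      simpa using re_inner_le_norm (𝕜 := ℂ) ψ φ
    rcases eq_or_lt_of_le (norm_nonneg φ) with h0 | h0
    · have h1 : (⟪ψ, φ⟫).re ≤ 0 := by rw [← h0] at hCS; simpa using hCS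
      have h2 : 0 ≤ (⟪ψ, φ⟫).re := le_trans (by nlinarith [sq_nonneg ‖φ‖]) hlow
      nlinarith [sq_nonneg ‖ψ‖]
    · nlinarith [sq_nonneg (‖ψ‖ - (lam (m+1) - lam i) * ‖φ‖), mul_pos h0 h0]
  · -- inner product identity
    rw [hT]
    nth_rewrite 1 [hb]
    rw [inner_add_left, inner_add_right, inner_add_right, hQφ, hψP]
    have hQP : ⟪Q, P⟫ = ((∑ j ∈ Icc 1 m, (lam j - lam i) * ‖a j‖^2 : ℝ) : ℂ) := by
      rw [hQ, hP, inner_sum_sum' u m huon]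
      push_cast
      refine Finset.sum_congr rfl fun j hj => ?_
      have hcj : c j = ((lam j : ℂ) - (lam i : ℂ)) * a j := rfl
      rw [hcj]
      simp only [map_mul, map_sub, Complex.conj_ofReal]
      rw [mul_assoc, conj_mul_self_eq]
      push_cast
      ring
    rw [hQP, add_zero, zero_add, Complex.add_re, Complex.ofReal_re]
  · -- norm identity
    rw [hT, norm_add_sq (𝕜 := ℂ) Q ψ, hQψ]
    have hQn : ‖Q‖^2 = ∑ j ∈ Icc 1 m, (lam j - lam i)^2 * ‖a j‖^2 := by
      have h1 : ⟪Q, Q⟫ = ((∑ j ∈ Icc 1 m, (lam j - lam i)^2 * ‖a j‖^2 : ℝ) : ℂ) := by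
        rw [hQ, inner_sum_sum' u m huon]
        push_cast
        refine Finset.sum_congr rfl fun j hj => ?_
        have hcj : ‖c j‖ = |lam j - lam i| * ‖a j‖ := by
          have h3 : c j = (((lam j - lam i : ℝ)) : ℂ) * a j := by
            have : c j = ((lam j : ℂ) - (lam i : ℂ)) * a j := rfl
            rw [this]; norm_cast
          rw [h3, norm_mul, Complex.norm_real, Real.norm_eq_abs]
        rw [conj_mul_self_eq, hcj]
        push_cast
        rw [mul_pow]
        norm_cast
        rw [sq_abs]
      have h2 : ⟪Q, Q⟫ = ((‖Q‖^2 : ℝ) : ℂ) := by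
        rw [inner_self_eq_norm_sq_to_K]; norm_cast
      exact_mod_cast h2.symm.trans h1
    rw [hQn]
    simp
    rfl


lemma crossineq (x y : ℝ) (hx : 0 < x) (hy : 0 < y) (p : ℝ) (hp : p ≤ 2) :
    (x - y) * (x ^ (p-1) * y - y ^ (p-1) * x) ≤ 0 := by
  have key : ∀ a b : ℝ, 0 < a → 0 < b → a ≤ b →
      (a - b) * (a ^ (p-1) * b - b ^ (p-1) * a) ≤ 0 := by
    intro a b ha hb hab
    have h2 : b ^ (p-2) ≤ a ^ (p-2) := Real.rpow_le_rpow_of_nonpos ha hab (by linarith)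
    have ha1 : a ^ (p-1) = a ^ (p-2) * a := by
      rw [← Real.rpow_add_one ha.ne' (p-2)]; ring_nf
    have hb1 : b ^ (p-1) = b ^ (p-2) * b := by
      rw [← Real.rpow_add_one hb.ne' (p-2)]; ring_nf
    have hnn : 0 ≤ a ^ (p-1) * b - b ^ (p-1) * a := by
      rw [ha1, hb1]
      have : b ^ (p-2) * (a*b) ≤ a ^ (p-2) * (a*b) :=
        mul_le_mul_of_nonneg_right h2 (by positivity)
      nlinarith
    have hab' : a - b ≤ 0 := by linarith
    exact mul_nonpos_of_nonpos_of_nonneg hab' hnn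
  rcases le_total x y with h | h
  · exact key x y hx hy h
  · have := key y x hy hx h
    nlinarith

theorem stmt4
    {H : Type*} [NormedAddCommGroup H] [InnerProductSpace ℂ H] [CompleteSpace H]
    (A : H →ₗ[ℂ] H)
    (hAsymm : ∀ x y : H, ⟪A x, y⟫ = ⟪x, A y⟫)
    (u : ℕ → H) (lam : ℕ → ℝ)
    (huon : ∀ i j : ℕ, 1 ≤ i → 1 ≤ j → ⟪u i, u j⟫ = if i = j then 1 else 0)
    (hmono : ∀ i j : ℕ, 1 ≤ i → i ≤ j → lam i ≤ lam j)
    (heig : ∀ i : ℕ, 1 ≤ i → A (u i) = (lam i : ℂ) • u i)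
    (N : ℕ) (hN : 1 ≤ N)
    (B : Fin N → H →ₗ[ℂ] H)
    (hBsymm : ∀ (k : Fin N) (x y : H), ⟪B k x, y⟫ = ⟪x, B k y⟫)
    (m : ℕ) (hm : 1 ≤ m)
    (hRR : ∀ φ : H, (∀ j : ℕ, 1 ≤ j → j ≤ m → ⟪φ, u j⟫ = 0) →
      lam (m + 1) * ‖φ‖ ^ 2 ≤ (⟪A φ, φ⟫).re)
    (hgap : lam m < lam (m + 1))

    (p : ℝ) (hp : p ≤ 2) :
    ∑ i ∈ Finset.Icc 1 m, (lam (m + 1) - lam i) ^ p * (∑ k : Fin N, (⟪(A ∘ₗ B k - B k ∘ₗ A) (u i), B k (u i)⟫).re)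
      ≤ ∑ i ∈ Finset.Icc 1 m, (lam (m + 1) - lam i) ^ (p - 1) * (∑ k : Fin N, ‖(A ∘ₗ B k - B k ∘ₗ A) (u i)‖ ^ 2) := by
  have hδpos : ∀ i ∈ Finset.Icc 1 m, 0 < lam (m+1) - lam i := by
    intro i hi
    obtain ⟨h1, h2⟩ := Finset.mem_Icc.mp hi
    have := hmono i m h1 h2
    linarith
  set w : ℕ → ℕ → ℝ := fun i j => ∑ k : Fin N, ‖⟪u j, B k (u i)⟫‖^2 with hw
  have hwnn : ∀ i j, 0 ≤ w i j := by
    intro i j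
    exact Finset.sum_nonneg fun k _ => by positivity
  have hwsymm : ∀ i j : ℕ, 1 ≤ i → 1 ≤ j → w i j = w j i := by
    intro i j hi hj
    refine Finset.sum_congr rfl fun k _ => ?_
    have h1 : ⟪u j, B k (u i)⟫ = (starRingEnd ℂ) ⟪u i, B k (u j)⟫ := by
      rw [← hBsymm k (u j) (u i), ← inner_conj_symm]
    rw [h1, RCLike.norm_conj]
  have hTrw : ∀ (k : Fin N) (i : ℕ), 1 ≤ i → (A ∘ₗ B k - B k ∘ₗ A) (u i)
      = A (B k (u i)) - (lam i : ℂ) • (B k (u i)) := by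
    intro k i hi
    simp [LinearMap.sub_apply, LinearMap.comp_apply, heig i hi, map_smul]
  -- per-i key bound
  have key : ∀ i ∈ Finset.Icc 1 m,
      (lam (m+1) - lam i) * (∑ k : Fin N, (⟪(A ∘ₗ B k - B k ∘ₗ A) (u i), B k (u i)⟫).re)
        - (∑ k : Fin N, ‖(A ∘ₗ B k - B k ∘ₗ A) (u i)‖ ^ 2)
      ≤ ∑ j ∈ Finset.Icc 1 m, (lam j - lam i) * (lam (m+1) - lam j) * w i j := by
    intro i hi
    obtain ⟨hi1, him⟩ := Finset.mem_Icc.mp hi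
    have perk : ∀ k : Fin N,
        (lam (m+1) - lam i) * (⟪(A ∘ₗ B k - B k ∘ₗ A) (u i), B k (u i)⟫).re
          - ‖(A ∘ₗ B k - B k ∘ₗ A) (u i)‖ ^ 2
        ≤ ∑ j ∈ Finset.Icc 1 m, (lam j - lam i) * (lam (m+1) - lam j) * ‖⟪u j, B k (u i)⟫‖^2 := by
      intro k
      obtain ⟨s, t, hst, hre, hnorm⟩ := aux_pointwise A hAsymm u lam huon heig m hRR i hi1 him
        (le_of_lt (hδpos i hi)) (B k (u i))
      rw [hTrw k i hi1, hre, hnorm]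
      have hexp : (lam (m+1) - lam i) *
            ((∑ j ∈ Finset.Icc 1 m, (lam j - lam i) * ‖⟪u j, B k (u i)⟫‖^2) + s)
          - ((∑ j ∈ Finset.Icc 1 m, (lam j - lam i)^2 * ‖⟪u j, B k (u i)⟫‖^2) + t)
          = (∑ j ∈ Finset.Icc 1 m, (lam j - lam i) * (lam (m+1) - lam j) * ‖⟪u j, B k (u i)⟫‖^2)
            + ((lam (m+1) - lam i) * s - t) := by
        have e1 : (lam (m+1) - lam i) * (∑ j ∈ Finset.Icc 1 m, (lam j - lam i) * ‖⟪u j, B k (u i)⟫‖^2)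
              - (∑ j ∈ Finset.Icc 1 m, (lam j - lam i)^2 * ‖⟪u j, B k (u i)⟫‖^2)
            = ∑ j ∈ Finset.Icc 1 m,
              ((lam (m+1) - lam i) * ((lam j - lam i) * ‖⟪u j, B k (u i)⟫‖^2)
                - (lam j - lam i)^2 * ‖⟪u j, B k (u i)⟫‖^2) := by
          rw [Finset.mul_sum, ← Finset.sum_sub_distrib]
        have e2 : ∑ j ∈ Finset.Icc 1 m,
            ((lam (m+1) - lam i) * ((lam j - lam i) * ‖⟪u j, B k (u i)⟫‖^2)
              - (lam j - lam i)^2 * ‖⟪u j, B k (u i)⟫‖^2)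
            = ∑ j ∈ Finset.Icc 1 m, (lam j - lam i) * (lam (m+1) - lam j) * ‖⟪u j, B k (u i)⟫‖^2 :=
          Finset.sum_congr rfl fun j _ => by ring
        rw [← e2, ← e1]; ring
      linarith [hexp, hst]
    calc (lam (m+1) - lam i) * (∑ k : Fin N, (⟪(A ∘ₗ B k - B k ∘ₗ A) (u i), B k (u i)⟫).re)
          - (∑ k : Fin N, ‖(A ∘ₗ B k - B k ∘ₗ A) (u i)‖ ^ 2)
        = ∑ k : Fin N, ((lam (m+1) - lam i) * (⟪(A ∘ₗ B k - B k ∘ₗ A) (u i), B k (u i)⟫).re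
            - ‖(A ∘ₗ B k - B k ∘ₗ A) (u i)‖ ^ 2) := by
          rw [Finset.sum_sub_distrib, Finset.mul_sum]
      _ ≤ ∑ k : Fin N, ∑ j ∈ Finset.Icc 1 m,
            (lam j - lam i) * (lam (m+1) - lam j) * ‖⟪u j, B k (u i)⟫‖^2 :=
          Finset.sum_le_sum fun k _ => perk k
      _ = ∑ j ∈ Finset.Icc 1 m, (lam j - lam i) * (lam (m+1) - lam j) * w i j := by
          rw [Finset.sum_comm]
          refine Finset.sum_congr rfl fun j _ => ?_
          simp only [hw]
          rw [Finset.mul_sum]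
  -- assemble
  set g : ℕ → ℕ → ℝ := fun i j =>
    (lam (m+1) - lam i) ^ (p-1) * ((lam j - lam i) * (lam (m+1) - lam j) * w i j) with hg
  have step1 : ∑ i ∈ Finset.Icc 1 m,
        (lam (m + 1) - lam i) ^ p * (∑ k : Fin N, (⟪(A ∘ₗ B k - B k ∘ₗ A) (u i), B k (u i)⟫).re)
      - ∑ i ∈ Finset.Icc 1 m,
        (lam (m + 1) - lam i) ^ (p - 1) * (∑ k : Fin N, ‖(A ∘ₗ B k - B k ∘ₗ A) (u i)‖ ^ 2)
      ≤ ∑ i ∈ Finset.Icc 1 m, ∑ j ∈ Finset.Icc 1 m, g i j := by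
    rw [← Finset.sum_sub_distrib]
    refine Finset.sum_le_sum fun i hi => ?_
    have hpe : (lam (m + 1) - lam i) ^ p
        = (lam (m + 1) - lam i) ^ (p - 1) * (lam (m + 1) - lam i) := by
      rw [← Real.rpow_add_one (hδpos i hi).ne' (p-1), sub_add_cancel]
    rw [hpe]
    have h1 : (lam (m + 1) - lam i) ^ (p - 1) * (lam (m + 1) - lam i)
          * (∑ k : Fin N, (⟪(A ∘ₗ B k - B k ∘ₗ A) (u i), B k (u i)⟫).re)
        - (lam (m + 1) - lam i) ^ (p - 1) * (∑ k : Fin N, ‖(A ∘ₗ B k - B k ∘ₗ A) (u i)‖ ^ 2)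
        = (lam (m + 1) - lam i) ^ (p - 1) *
          ((lam (m + 1) - lam i) * (∑ k : Fin N, (⟪(A ∘ₗ B k - B k ∘ₗ A) (u i), B k (u i)⟫).re)
            - (∑ k : Fin N, ‖(A ∘ₗ B k - B k ∘ₗ A) (u i)‖ ^ 2)) := by ring
    rw [h1]
    calc _ ≤ (lam (m + 1) - lam i) ^ (p - 1) *
          (∑ j ∈ Finset.Icc 1 m, (lam j - lam i) * (lam (m+1) - lam j) * w i j) :=
        mul_le_mul_of_nonneg_left (key i hi) (Real.rpow_nonneg (le_of_lt (hδpos i hi)) _)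
      _ = ∑ j ∈ Finset.Icc 1 m, g i j := by rw [Finset.mul_sum]
  have step2 : ∑ i ∈ Finset.Icc 1 m, ∑ j ∈ Finset.Icc 1 m, g i j ≤ 0 := by
    have hswap : ∑ i ∈ Finset.Icc 1 m, ∑ j ∈ Finset.Icc 1 m, g i j
        = ∑ i ∈ Finset.Icc 1 m, ∑ j ∈ Finset.Icc 1 m, g j i := Finset.sum_comm
    have hpair : ∑ i ∈ Finset.Icc 1 m, ∑ j ∈ Finset.Icc 1 m, (g i j + g j i) ≤ 0 := by
      refine Finset.sum_nonpos fun i hi => Finset.sum_nonpos fun j hj => ?_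
      obtain ⟨hi1, _⟩ := Finset.mem_Icc.mp hi
      obtain ⟨hj1, _⟩ := Finset.mem_Icc.mp hj
      have hdi := hδpos i hi
      have hdj := hδpos j hj
      have hcross := crossineq (lam (m+1) - lam i) (lam (m+1) - lam j) hdi hdj p hp
      have hrw : g i j + g j i
          = ((lam (m+1) - lam i) - (lam (m+1) - lam j)) *
            ((lam (m+1) - lam i) ^ (p-1) * (lam (m+1) - lam j)
              - (lam (m+1) - lam j) ^ (p-1) * (lam (m+1) - lam i)) * w i j := by
        rw [hg]
        simp only []
        rw [hwsymm j i hj1 hi1]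
        ring
      rw [hrw]
      exact mul_nonpos_of_nonpos_of_nonneg hcross (hwnn i j)
    have : ∑ i ∈ Finset.Icc 1 m, ∑ j ∈ Finset.Icc 1 m, (g i j + g j i)
        = ∑ i ∈ Finset.Icc 1 m, ∑ j ∈ Finset.Icc 1 m, g i j
          + ∑ i ∈ Finset.Icc 1 m, ∑ j ∈ Finset.Icc 1 m, g j i := by
      rw [← Finset.sum_add_distrib]
      exact Finset.sum_congr rfl fun i _ => by rw [← Finset.sum_add_distrib]
    rw [this, ← hswap] at hpair
    linarith
  linarith [step1, step2]
end

section
/- Under the stated abstract setting with (u_i)_{i≥1} a Hilbert (orthonormal) basis of H, if λ_m < λ_{m+1}, then for every real p ≥ 2: Σ_{i=1}^m (λ_{m+1} − λ_i)^p ρ_i ≤ (p/2) Σ_{i=1}^m (λ_{m+1} − λ_i)^{p−1} Λ_i, where the powers are real powers. -/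
open scoped ComplexInnerProductSpace

section Aux

-- Bernoulli-type inequality for rpow
private lemma stmt9_bern {q a b : ℝ} (hq : 1 ≤ q) (hb : 0 < b) (hba : b ≤ a) :
    a ^ q - b ^ q ≤ q * a ^ (q - 1) * (a - b) := by
  have ha : 0 < a := lt_of_lt_of_le hb hba
  have hs : (-1 : ℝ) ≤ b / a - 1 := by
    have : 0 ≤ b / a := by positivity
    linarith
  have h := one_add_mul_self_le_rpow_one_add hs hq
  have h1 : (1 : ℝ) + (b / a - 1) = b / a := by ring
  rw [h1] at h
  have h2 : (b / a) ^ q = b ^ q / a ^ q := Real.div_rpow hb.le ha.le q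
  rw [h2] at h
  have haq : (0:ℝ) < a ^ q := Real.rpow_pos_of_pos ha q
  have h3 := mul_le_mul_of_nonneg_left h haq.le
  have h4 : a ^ q * (b ^ q / a ^ q) = b ^ q := by field_simp
  rw [h4] at h3
  have h5 : a ^ q / a = a ^ (q - 1) := by
    rw [Real.rpow_sub ha, Real.rpow_one]
  have h6 : a ^ q * (1 + q * (b / a - 1)) = a ^ q + q * (a ^ q / a) * (b - a) := by
    field_simp
  rw [h6, h5] at h3
  linarith

private lemma stmt9_keyF {p b : ℝ} (hb : 0 < b) :
    ∀ x : ℝ, 0 < x →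
      HasDerivAt (fun x : ℝ => p / 2 * ((x ^ (p-1) + b ^ (p-1)) * (x - b)) - x ^ p + b ^ p)
        (p / 2 * ((p-1) * x ^ (p-1-1) * (x - b) + (x ^ (p-1) + b ^ (p-1)) * 1) - p * x ^ (p-1)) x := by
  intro x hx
  have h1 : HasDerivAt (fun x : ℝ => x ^ (p-1)) ((p-1) * x ^ (p-1-1)) x :=
    Real.hasDerivAt_rpow_const (Or.inl hx.ne')
  have h2 : HasDerivAt (fun x : ℝ => x ^ p) (p * x ^ (p-1)) x :=
    Real.hasDerivAt_rpow_const (Or.inl hx.ne')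
  exact (((((h1.add_const _).mul ((hasDerivAt_id x).sub_const b)).const_mul (p/2)).sub h2).add_const _)

private lemma stmt9_key_scalar_le {p a b : ℝ} (hp : 2 ≤ p) (hb : 0 < b) (hba : b ≤ a) :
    a ^ p - b ^ p ≤ p / 2 * ((a ^ (p-1) + b ^ (p-1)) * (a - b)) := by
  set F : ℝ → ℝ := fun x : ℝ => p / 2 * ((x ^ (p-1) + b ^ (p-1)) * (x - b)) - x ^ p + b ^ p with hF
  have hmono : MonotoneOn F (Set.Ici b) := by
    apply monotoneOn_of_deriv_nonneg (convex_Ici b)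
    · intro x hx
      have hx0 : 0 < x := lt_of_lt_of_le hb hx
      exact ((stmt9_keyF hb x hx0).continuousAt).continuousWithinAt
    · intro x hx
      rw [interior_Ici] at hx
      exact ((stmt9_keyF hb x (lt_trans hb hx)).differentiableAt).differentiableWithinAt
    · intro x hx
      rw [interior_Ici] at hx
      have hx0 : 0 < x := lt_trans hb hx
      rw [(stmt9_keyF hb x hx0).deriv]
      have hbern : x ^ (p-1) - b ^ (p-1) ≤ (p-1) * x ^ ((p-1)-1) * (x - b) :=
        stmt9_bern (by linarith) hb hx.le
      have hp0 : 0 < p := by linarith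
      nlinarith [hbern, hp0]
  have h0 : F b = 0 := by simp [hF]
  have h1 := hmono (Set.self_mem_Ici) (Set.mem_Ici.mpr hba) hba
  rw [h0] at h1
  simp only [hF] at h1
  linarith

private lemma stmt9_key_scalar {p a b : ℝ} (hp : 2 ≤ p) (ha : 0 < a) (hb : 0 < b) :
    (a ^ p - b ^ p) * (a - b) ≤ p / 2 * ((a ^ (p-1) + b ^ (p-1)) * (a - b) ^ 2) := by
  rcases le_total b a with h | h
  · have := stmt9_key_scalar_le hp hb h
    nlinarith [this, sub_nonneg.mpr h]
  · have := stmt9_key_scalar_le hp ha h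
    nlinarith [this, sub_nonneg.mpr h]

private lemma stmt9_symm_sum {ι : Type*} (s : Finset ι) (d : ι → ℝ) (β : ι → ι → ℝ) (p : ℝ)
    (hp : 2 ≤ p)
    (hd : ∀ i ∈ s, 0 < d i) (hβs : ∀ i ∈ s, ∀ j ∈ s, β i j = β j i)
    (hβ0 : ∀ i ∈ s, ∀ j ∈ s, 0 ≤ β i j) :
    ∑ i ∈ s, ∑ j ∈ s, d i ^ p * ((d i - d j) * β i j)
      ≤ p / 2 * ∑ i ∈ s, ∑ j ∈ s, d i ^ (p-1) * ((d i - d j) ^ 2 * β i j) := by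
  set L := ∑ i ∈ s, ∑ j ∈ s, d i ^ p * ((d i - d j) * β i j) with hL
  set R := ∑ i ∈ s, ∑ j ∈ s, d i ^ (p-1) * ((d i - d j) ^ 2 * β i j) with hR
  have hLswap : L = ∑ i ∈ s, ∑ j ∈ s, d j ^ p * ((d j - d i) * β i j) := by
    rw [hL, Finset.sum_comm]
    exact Finset.sum_congr rfl fun i hi => Finset.sum_congr rfl fun j hj => by
      rw [hβs j hj i hi]
  have hRswap : R = ∑ i ∈ s, ∑ j ∈ s, d j ^ (p-1) * ((d j - d i) ^ 2 * β i j) := by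
    rw [hR, Finset.sum_comm]
    exact Finset.sum_congr rfl fun i hi => Finset.sum_congr rfl fun j hj => by
      rw [hβs j hj i hi]
  have h2L : 2 * L = ∑ i ∈ s, ∑ j ∈ s,
      ((d i ^ p - d j ^ p) * (d i - d j)) * β i j := by
    rw [two_mul]
    nth_rewrite 2 [hLswap]
    rw [hL, ← Finset.sum_add_distrib]
    exact Finset.sum_congr rfl fun i _ => by
      rw [← Finset.sum_add_distrib]
      exact Finset.sum_congr rfl fun j _ => by ring
  have h2R : 2 * R = ∑ i ∈ s, ∑ j ∈ s,
      ((d i ^ (p-1) + d j ^ (p-1)) * (d i - d j) ^ 2) * β i j := by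
    rw [two_mul]
    nth_rewrite 2 [hRswap]
    rw [hR, ← Finset.sum_add_distrib]
    exact Finset.sum_congr rfl fun i _ => by
      rw [← Finset.sum_add_distrib]
      exact Finset.sum_congr rfl fun j _ => by ring
  have hle : 2 * L ≤ p / 2 * (2 * R) := by
    rw [h2L, h2R, Finset.mul_sum]
    refine Finset.sum_le_sum fun i hi => ?_
    rw [Finset.mul_sum]
    refine Finset.sum_le_sum fun j hj => ?_
    rw [← mul_assoc]
    exact mul_le_mul_of_nonneg_right (stmt9_key_scalar hp (hd i hi) (hd j hj)) (hβ0 i hi j hj)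
  linarith

variable {H : Type*} [NormedAddCommGroup H] [InnerProductSpace ℂ H]
variable {ι : Type*} [DecidableEq ι] {s : Finset ι} {u : ι → H}

/-- projection onto span of (u j), j ∈ s -/
noncomputable def stmt9proj (s : Finset ι) (u : ι → H) (x : H) : H := ∑ j ∈ s, ⟪u j, x⟫ • u j

lemma stmt9_inner_u_proj (hon : ∀ i ∈ s, ∀ j ∈ s, ⟪u i, u j⟫ = if i = j then 1 else 0)
    (x : H) {l : ι} (hl : l ∈ s) : ⟪u l, stmt9proj s u x⟫ = ⟪u l, x⟫ := by
  rw [stmt9proj, inner_sum]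
  rw [Finset.sum_eq_single l]
  · rw [inner_smul_right, hon l hl l hl, if_pos rfl, mul_one]
  · intro j hj hjl
    rw [inner_smul_right, hon l hl j hj, if_neg (fun h => hjl h.symm), mul_zero]
  · intro h; exact absurd hl h

lemma stmt9_inner_u_sub_proj (hon : ∀ i ∈ s, ∀ j ∈ s, ⟪u i, u j⟫ = if i = j then 1 else 0)
    (x : H) {l : ι} (hl : l ∈ s) : ⟪u l, x - stmt9proj s u x⟫ = 0 := by
  rw [inner_sub_right, stmt9_inner_u_proj hon x hl, sub_self]

omit [DecidableEq ι] in
lemma stmt9_proj_inner_perp (x z : H) (hz : ∀ j ∈ s, ⟪u j, z⟫ = 0) :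
    ⟪stmt9proj s u x, z⟫ = 0 := by
  rw [stmt9proj, sum_inner]
  refine Finset.sum_eq_zero (fun j hj => ?_)
  rw [inner_smul_left, hz j hj, mul_zero]

omit [DecidableEq ι] in
lemma stmt9_inner_proj_self
    (x : H) : ⟪x, stmt9proj s u x⟫ = ((∑ j ∈ s, ‖⟪u j, x⟫‖ ^ 2 : ℝ) : ℂ) := by
  rw [stmt9proj, inner_sum, Complex.ofReal_sum]
  refine Finset.sum_congr rfl (fun j hj => ?_)
  rw [inner_smul_right]
  rw [← inner_conj_symm x (u j)]
  rw [mul_comm, ← Complex.normSq_eq_conj_mul_self]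
  rw [Complex.normSq_eq_norm_sq]

lemma stmt9_norm_proj_sq (hon : ∀ i ∈ s, ∀ j ∈ s, ⟪u i, u j⟫ = if i = j then 1 else 0)
    (x : H) : ‖stmt9proj s u x‖ ^ 2 = ∑ j ∈ s, ‖⟪u j, x⟫‖ ^ 2 := by
  have h : ⟪stmt9proj s u x, stmt9proj s u x⟫ = ((∑ j ∈ s, ‖⟪u j, x⟫‖ ^ 2 : ℝ) : ℂ) := by
    rw [stmt9proj, sum_inner]
    rw [Complex.ofReal_sum]
    refine Finset.sum_congr rfl (fun j hj => ?_)
    rw [inner_smul_left, ← stmt9proj, stmt9_inner_u_proj hon x hj]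
    rw [← Complex.normSq_eq_conj_mul_self, Complex.normSq_eq_norm_sq]
  have h2 := inner_self_eq_norm_sq (𝕜 := ℂ) (stmt9proj s u x)
  rw [h] at h2
  simp only [RCLike.re_to_complex, Complex.ofReal_re] at h2
  exact h2.symm

lemma stmt9_norm_sq_decomp (hon : ∀ i ∈ s, ∀ j ∈ s, ⟪u i, u j⟫ = if i = j then 1 else 0)
    (x : H) : ‖x‖ ^ 2 = ∑ j ∈ s, ‖⟪u j, x⟫‖ ^ 2 + ‖x - stmt9proj s u x‖ ^ 2 := by
  have h1 := norm_sub_sq (𝕜 := ℂ) x (stmt9proj s u x)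
  rw [stmt9_inner_proj_self x] at h1
  rw [stmt9_norm_proj_sq hon x] at h1
  simp only [RCLike.re_to_complex, Complex.ofReal_re] at h1
  linarith

end Aux

set_option maxHeartbeats 1000000 in
theorem stmt9
    {H : Type*} [NormedAddCommGroup H] [InnerProductSpace ℂ H] [CompleteSpace H]
    (A : H →ₗ[ℂ] H)
    (hAsymm : ∀ x y : H, ⟪A x, y⟫ = ⟪x, A y⟫)
    (u : ℕ → H) (lam : ℕ → ℝ)
    (huon : ∀ i j : ℕ, 1 ≤ i → 1 ≤ j → ⟪u i, u j⟫ = if i = j then 1 else 0)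
    (hmono : ∀ i j : ℕ, 1 ≤ i → i ≤ j → lam i ≤ lam j)
    (heig : ∀ i : ℕ, 1 ≤ i → A (u i) = (lam i : ℂ) • u i)
    (N : ℕ) (hN : 1 ≤ N)
    (B : Fin N → H →ₗ[ℂ] H)
    (hBsymm : ∀ (k : Fin N) (x y : H), ⟪B k x, y⟫ = ⟪x, B k y⟫)
    (m : ℕ) (hm : 1 ≤ m)
    (hRR : ∀ φ : H, (∀ j : ℕ, 1 ≤ j → j ≤ m → ⟪φ, u j⟫ = 0) →
      lam (m + 1) * ‖φ‖ ^ 2 ≤ (⟪A φ, φ⟫).re)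
    (hcomplete : (Submodule.span ℂ (u '' {i : ℕ | 1 ≤ i})).topologicalClosure = ⊤)
    (hgap : lam m < lam (m + 1))

    (p : ℝ) (hp : 2 ≤ p) :
    ∑ i ∈ Finset.Icc 1 m, (lam (m + 1) - lam i) ^ p * (∑ k : Fin N, (⟪(A ∘ₗ B k - B k ∘ₗ A) (u i), B k (u i)⟫).re)
      ≤ (p / 2) *
        ∑ i ∈ Finset.Icc 1 m, (lam (m + 1) - lam i) ^ (p - 1) * (∑ k : Fin N, ‖(A ∘ₗ B k - B k ∘ₗ A) (u i)‖ ^ 2) := by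
  classical
  set s : Finset ℕ := Finset.Icc 1 m with hs
  have hmem : ∀ i ∈ s, 1 ≤ i ∧ i ≤ m := fun i hi => Finset.mem_Icc.mp hi
  have hon : ∀ i ∈ s, ∀ j ∈ s, ⟪u i, u j⟫ = if i = j then 1 else 0 :=
    fun i hi j hj => huon i j (hmem i hi).1 (hmem j hj).1
  set d : ℕ → ℝ := fun i => lam (m + 1) - lam i with hd
  have hdpos : ∀ i ∈ s, 0 < d i := by
    intro i hi
    have h1 := hmono i m (hmem i hi).1 (hmem i hi).2
    simp only [hd]
    linarith
  -- abbreviations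
  set C : ℕ → Fin N → H := fun i k => (A ∘ₗ B k - B k ∘ₗ A) (u i) with hC
  set v : ℕ → Fin N → H := fun i k => B k (u i) with hv
  set φ : ℕ → Fin N → H := fun i k => v i k - stmt9proj s u (v i k) with hφ
  set T : ℕ → Fin N → ℝ := fun i k => (⟪C i k, φ i k⟫).re with hT
  set S : ℕ → Fin N → ℝ := fun i k => ‖C i k - stmt9proj s u (C i k)‖ ^ 2 with hS
  set β : ℕ → ℕ → ℝ := fun i j => ∑ k : Fin N, ‖⟪v i k, u j⟫‖ ^ 2 with hβ
  -- basic facts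
  have hCeq : ∀ i ∈ s, ∀ k : Fin N, C i k = A (v i k) - (lam i : ℂ) • v i k := by
    intro i hi k
    simp only [hC, hv, LinearMap.sub_apply, LinearMap.comp_apply, heig i (hmem i hi).1,
      map_smul]
  have hCu : ∀ i ∈ s, ∀ k : Fin N, ∀ j ∈ s,
      ⟪C i k, u j⟫ = ((lam j - lam i : ℝ) : ℂ) * ⟪v i k, u j⟫ := by
    intro i hi k j hj
    rw [hCeq i hi k, inner_sub_left, inner_smul_left, hAsymm, heig j (hmem j hj).1,
      inner_smul_right, Complex.conj_ofReal]
    push_cast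
    ring
  have hφu : ∀ i ∈ s, ∀ k : Fin N, ∀ j ∈ s, ⟪u j, φ i k⟫ = 0 := by
    intro i hi k j hj
    exact stmt9_inner_u_sub_proj hon (v i k) hj
  have hφu' : ∀ i ∈ s, ∀ k : Fin N, ∀ j : ℕ, 1 ≤ j → j ≤ m → ⟪φ i k, u j⟫ = 0 := by
    intro i hi k j h1 h2
    rw [← inner_conj_symm, hφu i hi k j (Finset.mem_Icc.mpr ⟨h1, h2⟩), map_zero]
  -- rho decomposition
  have hρ : ∀ i ∈ s, ∀ k : Fin N,
      (⟪C i k, v i k⟫).re = (∑ j ∈ s, (lam j - lam i) * ‖⟪v i k, u j⟫‖ ^ 2) + T i k := by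
    intro i hi k
    have hsplit : ⟪C i k, v i k⟫ = ⟪C i k, stmt9proj s u (v i k)⟫ + ⟪C i k, φ i k⟫ := by
      rw [← inner_add_right]
      congr 1
      simp [hφ]
    have hCproj : ⟪C i k, stmt9proj s u (v i k)⟫
        = ((∑ j ∈ s, (lam j - lam i) * ‖⟪v i k, u j⟫‖ ^ 2 : ℝ) : ℂ) := by
      rw [stmt9proj, inner_sum, Complex.ofReal_sum]
      refine Finset.sum_congr rfl (fun j hj => ?_)
      have hz : (⟪u j, v i k⟫ : ℂ) = (starRingEnd ℂ) ⟪v i k, u j⟫ := (inner_conj_symm _ _).symm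
      rw [inner_smul_right, hCu i hi k j hj, hz]
      rw [show (starRingEnd ℂ) ⟪v i k, u j⟫ * (((lam j - lam i : ℝ) : ℂ) * ⟪v i k, u j⟫)
          = ((lam j - lam i : ℝ) : ℂ) * ((starRingEnd ℂ) ⟪v i k, u j⟫ * ⟪v i k, u j⟫) by ring]
      rw [← Complex.normSq_eq_conj_mul_self, Complex.normSq_eq_norm_sq]
      push_cast
      norm_num
    rw [hsplit, hCproj, Complex.add_re, Complex.ofReal_re]
  -- Lambda decomposition
  have hΛ : ∀ i ∈ s, ∀ k : Fin N,
      ‖C i k‖ ^ 2 = (∑ j ∈ s, (lam j - lam i) ^ 2 * ‖⟪v i k, u j⟫‖ ^ 2) + S i k := by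
    intro i hi k
    have h1 := stmt9_norm_sq_decomp hon (C i k)
    rw [h1, hS]
    congr 1
    refine Finset.sum_congr rfl (fun j hj => ?_)
    rw [norm_inner_symm, hCu i hi k j hj, norm_mul, Complex.norm_real]
    rw [mul_pow, Real.norm_eq_abs, sq_abs]
  -- lower bound for T
  have hTlow : ∀ i ∈ s, ∀ k : Fin N, d i * ‖φ i k‖ ^ 2 ≤ T i k := by
    intro i hi k
    have hvsum : A (stmt9proj s u (v i k)) + A (φ i k) = A (v i k) := by
      rw [← map_add]
      congr 1
      simp [hφ]
    have hAproj : ⟪A (stmt9proj s u (v i k)), φ i k⟫ = 0 := by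
      rw [stmt9proj, map_sum, sum_inner]
      refine Finset.sum_eq_zero (fun j hj => ?_)
      rw [map_smul, heig j (hmem j hj).1, inner_smul_left, inner_smul_left,
        hφu i hi k j hj, mul_zero, mul_zero]
    have hprojperp : ⟪stmt9proj s u (v i k), φ i k⟫ = 0 :=
      stmt9_proj_inner_perp (v i k) (φ i k) (fun j hj => hφu i hi k j hj)
    have hAv : ⟪A (v i k), φ i k⟫ = ⟪A (φ i k), φ i k⟫ := by
      rw [← hvsum, inner_add_left, hAproj, zero_add]
    have hvφ : ⟪v i k, φ i k⟫ = ((‖φ i k‖ ^ 2 : ℝ) : ℂ) := by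
      have : v i k = stmt9proj s u (v i k) + φ i k := by simp [hφ]
      rw [this, inner_add_left, hprojperp, zero_add, inner_self_eq_norm_sq_to_K]
      norm_num
    have hCφ : ⟪C i k, φ i k⟫ = ⟪A (φ i k), φ i k⟫ - ((lam i * ‖φ i k‖ ^ 2 : ℝ) : ℂ) := by
      rw [hCeq i hi k, inner_sub_left, inner_smul_left, Complex.conj_ofReal, hAv, hvφ]
      push_cast; ring
    have hre : T i k = (⟪A (φ i k), φ i k⟫).re - lam i * ‖φ i k‖ ^ 2 := by
      rw [hT]
      simp only [hCφ, Complex.sub_re, Complex.ofReal_re]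
    have hRRφ := hRR (φ i k) (hφu' i hi k)
    rw [hre]
    have hdd : d i = lam (m + 1) - lam i := rfl
    rw [hdd]
    nlinarith [hRRφ, sq_nonneg ‖φ i k‖]
  have hT0 : ∀ i ∈ s, ∀ k : Fin N, 0 ≤ T i k := by
    intro i hi k
    have := hTlow i hi k
    nlinarith [hdpos i hi, sq_nonneg ‖φ i k‖]
  -- d i * T ≤ S
  have hTS : ∀ i ∈ s, ∀ k : Fin N, d i * T i k ≤ S i k := by
    intro i hi k
    have hCφ2 : ⟪C i k, φ i k⟫ = ⟪C i k - stmt9proj s u (C i k), φ i k⟫ := by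
      rw [inner_sub_left,
        stmt9_proj_inner_perp (C i k) (φ i k) (fun j hj => hφu i hi k j hj), sub_zero]
    have hCS : T i k ≤ ‖C i k - stmt9proj s u (C i k)‖ * ‖φ i k‖ := by
      rw [hT]
      simp only [hCφ2]
      exact re_inner_le_norm (𝕜 := ℂ) _ _
    have h1 := hTlow i hi k
    have h0 := hT0 i hi k
    have hdi := hdpos i hi
    rcases eq_or_lt_of_le (norm_nonneg (φ i k)) with hf | hf
    · have : T i k = 0 := by
        have := hCS
        rw [← hf] at this
        simp at this
        linarith
      rw [this, mul_zero]
      show (0:ℝ) ≤ ‖C i k - stmt9proj s u (C i k)‖ ^ 2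
      positivity
    · have hdf : d i * ‖φ i k‖ ≤ ‖C i k - stmt9proj s u (C i k)‖ := by
        have h2 : d i * ‖φ i k‖ * ‖φ i k‖ ≤ ‖C i k - stmt9proj s u (C i k)‖ * ‖φ i k‖ := by
          nlinarith [h1, hCS]
        exact le_of_mul_le_mul_right h2 hf
      show d i * T i k ≤ ‖C i k - stmt9proj s u (C i k)‖ ^ 2
      nlinarith [mul_le_mul_of_nonneg_left hCS hdi.le,
        mul_le_mul_of_nonneg_left hdf (norm_nonneg (C i k - stmt9proj s u (C i k)))]
  -- β symmetry and nonnegativity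
  have hβs : ∀ i ∈ s, ∀ j ∈ s, β i j = β j i := by
    intro i hi j hj
    simp only [hβ, hv]
    refine Finset.sum_congr rfl (fun k _ => ?_)
    rw [hBsymm k (u i) (u j), ← norm_inner_symm]
  have hβ0 : ∀ i ∈ s, ∀ j ∈ s, 0 ≤ β i j := by
    intro i hi j hj
    simp only [hβ]
    positivity
  -- expand LHS
  have hLHS : ∑ i ∈ s, d i ^ p * (∑ k : Fin N, (⟪C i k, v i k⟫).re)
      = (∑ i ∈ s, ∑ j ∈ s, d i ^ p * ((d i - d j) * β i j))
        + ∑ i ∈ s, ∑ k : Fin N, d i ^ p * T i k := by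
    rw [← Finset.sum_add_distrib]
    refine Finset.sum_congr rfl (fun i hi => ?_)
    rw [Finset.sum_congr rfl (fun k _ => hρ i hi k), Finset.sum_add_distrib, mul_add]
    congr 1
    · rw [Finset.sum_comm, Finset.mul_sum]
      refine Finset.sum_congr rfl (fun j hj => ?_)
      rw [Finset.mul_sum, hβ, Finset.mul_sum, Finset.mul_sum]
      refine Finset.sum_congr rfl (fun k _ => ?_)
      simp only [hd]
      ring
    · rw [Finset.mul_sum]
  -- expand RHS
  have hRHS : ∑ i ∈ s, d i ^ (p-1) * (∑ k : Fin N, ‖C i k‖ ^ 2)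
      = (∑ i ∈ s, ∑ j ∈ s, d i ^ (p-1) * ((d i - d j) ^ 2 * β i j))
        + ∑ i ∈ s, ∑ k : Fin N, d i ^ (p-1) * S i k := by
    rw [← Finset.sum_add_distrib]
    refine Finset.sum_congr rfl (fun i hi => ?_)
    rw [Finset.sum_congr rfl (fun k _ => hΛ i hi k), Finset.sum_add_distrib, mul_add]
    congr 1
    · rw [Finset.sum_comm, Finset.mul_sum]
      refine Finset.sum_congr rfl (fun j hj => ?_)
      rw [Finset.mul_sum, hβ, Finset.mul_sum, Finset.mul_sum]
      refine Finset.sum_congr rfl (fun k _ => ?_)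
      simp only [hd]
      ring
    · rw [Finset.mul_sum]
  -- the two main inequalities
  have hI : ∑ i ∈ s, ∑ j ∈ s, d i ^ p * ((d i - d j) * β i j)
      ≤ p / 2 * ∑ i ∈ s, ∑ j ∈ s, d i ^ (p-1) * ((d i - d j) ^ 2 * β i j) :=
    stmt9_symm_sum s d β p hp hdpos hβs hβ0
  have hII : ∑ i ∈ s, ∑ k : Fin N, d i ^ p * T i k
      ≤ p / 2 * ∑ i ∈ s, ∑ k : Fin N, d i ^ (p-1) * S i k := by
    rw [Finset.mul_sum]
    refine Finset.sum_le_sum (fun i hi => ?_)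
    rw [Finset.mul_sum]
    refine Finset.sum_le_sum (fun k _ => ?_)
    have hdi := hdpos i hi
    have hdp : d i ^ p = d i ^ (p-1) * d i := by
      rw [show p = (p-1) + 1 by ring, Real.rpow_add_one hdi.ne']
      ring_nf
    rw [hdp]
    have h1 : d i ^ (p-1) * d i * T i k ≤ d i ^ (p-1) * S i k := by
      rw [mul_assoc]
      exact mul_le_mul_of_nonneg_left (hTS i hi k) (Real.rpow_nonneg hdi.le _)
    have h2 : d i ^ (p-1) * S i k ≤ p / 2 * (d i ^ (p-1) * S i k) := by
      have hS0 : 0 ≤ d i ^ (p-1) * S i k := by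
        apply mul_nonneg (Real.rpow_nonneg hdi.le _)
        show (0:ℝ) ≤ ‖C i k - stmt9proj s u (C i k)‖ ^ 2
        positivity
      nlinarith [hS0]
    exact le_trans h1 h2
  -- finish
  calc ∑ i ∈ s, d i ^ p * (∑ k : Fin N, (⟪C i k, v i k⟫).re)
      = (∑ i ∈ s, ∑ j ∈ s, d i ^ p * ((d i - d j) * β i j))
        + ∑ i ∈ s, ∑ k : Fin N, d i ^ p * T i k := hLHS
    _ ≤ p / 2 * (∑ i ∈ s, ∑ j ∈ s, d i ^ (p-1) * ((d i - d j) ^ 2 * β i j))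
        + p / 2 * (∑ i ∈ s, ∑ k : Fin N, d i ^ (p-1) * S i k) := add_le_add hI hII
    _ = p / 2 * ∑ i ∈ s, d i ^ (p-1) * (∑ k : Fin N, ‖C i k‖ ^ 2) := by
        rw [hRHS, mul_add]
end

section
/- Let m ≥ 1, let 0 < λ_1 ≤ λ_2 ≤ … ≤ λ_m be reals, let σ > λ_m, and let p₁ ≤ p₂ be real numbers. Then (Σ_{i=1}^m (σ − λ_i)^{p₁})·(Σ_{i=1}^m (σ − λ_i)^{p₂−1} λ_i) ≤ (Σ_{i=1}^m (σ − λ_i)^{p₂})·(Σ_{i=1}^m (σ − λ_i)^{p₁−1} λ_i), where x^t denotes the real power exp(t·log x) for x > 0. -/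
open scoped ComplexInnerProductSpace

theorem stmt16
    (m : ℕ) (hm : 1 ≤ m) (lam : ℕ → ℝ)
    (hpos : ∀ i : ℕ, 1 ≤ i → i ≤ m → 0 < lam i)
    (hmono : ∀ i j : ℕ, 1 ≤ i → i ≤ j → j ≤ m → lam i ≤ lam j)
    (σ : ℝ) (hσ : lam m < σ)
    (p₁ p₂ : ℝ) (hp : p₁ ≤ p₂) :
    (∑ i ∈ Finset.Icc 1 m, (σ - lam i) ^ p₁) *
        (∑ i ∈ Finset.Icc 1 m, (σ - lam i) ^ (p₂ - 1) * lam i)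
      ≤ (∑ i ∈ Finset.Icc 1 m, (σ - lam i) ^ p₂) *
        (∑ i ∈ Finset.Icc 1 m, (σ - lam i) ^ (p₁ - 1) * lam i) := by
  set S := Finset.Icc 1 m with hS
  set q := p₂ - p₁ with hq
  have hq0 : 0 ≤ q := by simp [hq]; linarith
  have hmem : ∀ i ∈ S, 1 ≤ i ∧ i ≤ m := by
    intro i hi; exact Finset.mem_Icc.mp hi
  have hapos : ∀ i ∈ S, 0 < σ - lam i := by
    intro i hi
    obtain ⟨h1, h2⟩ := hmem i hi
    have := hmono i m h1 h2 le_rfl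
    linarith
  have hσpos : 0 < σ := by
    have := hpos m hm le_rfl; linarith
  -- key pairwise inequality
  have key : ∀ i ∈ S, ∀ j ∈ S,
      (σ - lam i) ^ p₁ * ((σ - lam j) ^ (p₂ - 1) * lam j)
      + (σ - lam j) ^ p₁ * ((σ - lam i) ^ (p₂ - 1) * lam i)
      ≤ (σ - lam i) ^ p₂ * ((σ - lam j) ^ (p₁ - 1) * lam j)
      + (σ - lam j) ^ p₂ * ((σ - lam i) ^ (p₁ - 1) * lam i) := by
    intro i hi j hj
    set a := σ - lam i with ha'
    set b := σ - lam j with hb'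
    have ha : 0 < a := hapos i hi
    have hb : 0 < b := hapos j hj
    have hA : 0 < a ^ (p₁ - 1) := Real.rpow_pos_of_pos ha _
    have hB : 0 < b ^ (p₁ - 1) := Real.rpow_pos_of_pos hb _
    have e1 : a ^ p₁ = a ^ (p₁ - 1) * a := by
      have : a ^ p₁ = a ^ (p₁ - 1) * a ^ (1:ℝ) := by
        rw [← Real.rpow_add ha]; ring_nf
      simpa [Real.rpow_one] using this
    have e2 : b ^ p₁ = b ^ (p₁ - 1) * b := by
      have : b ^ p₁ = b ^ (p₁ - 1) * b ^ (1:ℝ) := by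
        rw [← Real.rpow_add hb]; ring_nf
      simpa [Real.rpow_one] using this
    have e3 : a ^ (p₂ - 1) = a ^ (p₁ - 1) * a ^ q := by
      rw [← Real.rpow_add ha, hq]; ring_nf
    have e4 : b ^ (p₂ - 1) = b ^ (p₁ - 1) * b ^ q := by
      rw [← Real.rpow_add hb, hq]; ring_nf
    have e5 : a ^ p₂ = a ^ (p₁ - 1) * (a ^ q * a) := by
      have : a ^ p₂ = a ^ (p₁ - 1) * (a ^ q * a ^ (1:ℝ)) := by
        rw [← Real.rpow_add ha, ← Real.rpow_add ha, hq]; ring_nf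
      simpa [Real.rpow_one] using this
    have e6 : b ^ p₂ = b ^ (p₁ - 1) * (b ^ q * b) := by
      have : b ^ p₂ = b ^ (p₁ - 1) * (b ^ q * b ^ (1:ℝ)) := by
        rw [← Real.rpow_add hb, ← Real.rpow_add hb, hq]; ring_nf
      simpa [Real.rpow_one] using this
    have hsign : 0 ≤ (a ^ q - b ^ q) * (a * lam j - b * lam i) := by
      have hdiff : a * lam j - b * lam i = σ * (lam j - lam i) := by
        rw [ha', hb']; ring
      rcases le_total i j with hij | hij
      · obtain ⟨h1i, h2i⟩ := hmem i hi
        obtain ⟨h1j, h2j⟩ := hmem j hj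
        have hl : lam i ≤ lam j := hmono i j h1i hij h2j
        have hab : b ≤ a := by rw [ha', hb']; linarith
        have hqq : b ^ q ≤ a ^ q := Real.rpow_le_rpow hb.le hab hq0
        apply mul_nonneg (by linarith)
        rw [hdiff]
        exact mul_nonneg hσpos.le (by linarith)
      · obtain ⟨h1i, h2i⟩ := hmem i hi
        obtain ⟨h1j, h2j⟩ := hmem j hj
        have hl : lam j ≤ lam i := hmono j i h1j hij h2i
        have hab : a ≤ b := by rw [ha', hb']; linarith
        have hqq : a ^ q ≤ b ^ q := Real.rpow_le_rpow ha.le hab hq0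
        have h1 : a ^ q - b ^ q ≤ 0 := by linarith
        have h2 : a * lam j - b * lam i ≤ 0 := by
          rw [hdiff]
          exact mul_nonpos_of_nonneg_of_nonpos hσpos.le (by linarith)
        nlinarith [mul_nonneg (neg_nonneg.2 h1) (neg_nonneg.2 h2)]
    rw [e1, e2, e3, e4, e5, e6]
    nlinarith [mul_nonneg (mul_pos hA hB).le hsign]
  -- expand products into double sums and symmetrize
  rw [Finset.sum_mul_sum, Finset.sum_mul_sum]
  have hcomm : ∀ f : ℕ → ℕ → ℝ,
      2 * (∑ i ∈ S, ∑ j ∈ S, f i j) = ∑ i ∈ S, ∑ j ∈ S, (f i j + f j i) := by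
    intro f
    have h1 : (∑ i ∈ S, ∑ j ∈ S, f j i) = ∑ i ∈ S, ∑ j ∈ S, f i j :=
      Finset.sum_comm
    simp only [Finset.sum_add_distrib]
    rw [h1]; ring
  have h2 : 2 * (∑ i ∈ S, ∑ j ∈ S, (σ - lam i) ^ p₁ * ((σ - lam j) ^ (p₂ - 1) * lam j))
      ≤ 2 * (∑ i ∈ S, ∑ j ∈ S, (σ - lam i) ^ p₂ * ((σ - lam j) ^ (p₁ - 1) * lam j)) := by
    rw [hcomm, hcomm]
    apply Finset.sum_le_sum
    intro i hi
    apply Finset.sum_le_sum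
    intro j hj
    exact key i hi j hj
  linarith
end

section
/- Let m ≥ 1, let 0 < λ_1 ≤ λ_2 ≤ … ≤ λ_m be reals, let c > 0, and let 0 ≤ p₁ ≤ p₂ ≤ 2. Suppose σ₁ is the unique zero of f_{p₁} in the open interval (λ_m, ∞) (i.e., f_{p₁}(σ₁) = 0 and f_{p₁}(σ) ≠ 0 for every other σ > λ_m), and suppose σ₂ > λ_m satisfies f_{p₂}(σ₂) = 0. Then σ₂ ≤ σ₁. -/
open scoped ComplexInnerProductSpace

lemma stmt17_term_le (c p₁ p₂ a lam : ℝ) (hc : 0 < c) (ha : 0 < a) (hlam : 0 < lam)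
    (hp : p₁ ≤ p₂) :
    a ^ p₁ - c * (a ^ (p₁ - 1) * lam) ≤
      (c * (a + lam) / (1 + c)) ^ (p₁ - p₂) * (a ^ p₂ - c * (a ^ (p₂ - 1) * lam)) := by
  set σ : ℝ := a + lam with hσdef
  have hσpos : 0 < σ := by positivity
  have hwpos : 0 < c * σ / (1 + c) := by positivity
  have hw : a ^ p₁ = a ^ (p₁ - p₂) * a ^ p₂ := by
    rw [← Real.rpow_add ha]; ring_nf
  have hw1 : a ^ (p₁ - 1) = a ^ (p₁ - p₂) * a ^ (p₂ - 1) := by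
    rw [← Real.rpow_add ha]; ring_nf
  have hA : a ^ p₂ = a ^ (p₂ - 1) * a := by
    rw [← Real.rpow_add_one ha.ne']; ring_nf
  have ht : a ^ p₂ - c * (a ^ (p₂ - 1) * lam) = a ^ (p₂ - 1) * (a - c * lam) := by
    rw [hA]; ring
  have hLHS : a ^ p₁ - c * (a ^ (p₁ - 1) * lam)
      = a ^ (p₁ - p₂) * (a ^ (p₂ - 1) * (a - c * lam)) := by
    rw [hw, hw1, hA]; ring
  rw [hLHS, ht]
  rcases le_or_gt (c * lam) a with hcase | hcase
  · have haw : c * σ / (1 + c) ≤ a := by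
      rw [div_le_iff₀ (by linarith)]
      simp only [hσdef]; nlinarith
    have hle : a ^ (p₁ - p₂) ≤ (c * σ / (1 + c)) ^ (p₁ - p₂) :=
      Real.rpow_le_rpow_of_nonpos hwpos haw (by linarith)
    have htpos : 0 ≤ a ^ (p₂ - 1) * (a - c * lam) := by
      have := Real.rpow_pos_of_pos ha (p₂ - 1)
      nlinarith
    nlinarith
  · have haw : a ≤ c * σ / (1 + c) := by
      rw [le_div_iff₀ (by linarith)]
      simp only [hσdef]; nlinarith
    have hle : (c * σ / (1 + c)) ^ (p₁ - p₂) ≤ a ^ (p₁ - p₂) :=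
      Real.rpow_le_rpow_of_nonpos ha haw (by linarith)
    have htneg : a ^ (p₂ - 1) * (a - c * lam) ≤ 0 := by
      have := Real.rpow_pos_of_pos ha (p₂ - 1)
      nlinarith
    nlinarith

lemma stmt17_term_pos (c p a lam : ℝ) (ha : 0 < a) (hgt : c * lam < a) :
    0 < a ^ p - c * (a ^ (p - 1) * lam) := by
  have hA : a ^ p = a ^ (p - 1) * a := by
    rw [← Real.rpow_add_one ha.ne']; ring_nf
  have hpow := Real.rpow_pos_of_pos ha (p - 1)
  rw [hA]; nlinarith

theorem stmt17
    (m : ℕ) (hm : 1 ≤ m) (lam : ℕ → ℝ)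
    (hpos : ∀ i : ℕ, 1 ≤ i → i ≤ m → 0 < lam i)
    (hmono : ∀ i j : ℕ, 1 ≤ i → i ≤ j → j ≤ m → lam i ≤ lam j)
    (c : ℝ) (hc : 0 < c)
    (p₁ p₂ : ℝ) (hp0 : 0 ≤ p₁) (hp12 : p₁ ≤ p₂) (hp2 : p₂ ≤ 2)
    (σ₁ σ₂ : ℝ) (hσ₁ : lam m < σ₁)
    (hσ₁zero : (fun (p : ℝ) (σ : ℝ) =>
      (1 / (m : ℝ)) * ∑ i ∈ Finset.Icc 1 m, (σ - lam i) ^ p -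
        (c / (m : ℝ)) * ∑ i ∈ Finset.Icc 1 m, (σ - lam i) ^ (p - 1) * lam i) p₁ σ₁ = 0)
    (hσ₁uniq : ∀ σ : ℝ, lam m < σ → (fun (p : ℝ) (σ : ℝ) =>
      (1 / (m : ℝ)) * ∑ i ∈ Finset.Icc 1 m, (σ - lam i) ^ p -
        (c / (m : ℝ)) * ∑ i ∈ Finset.Icc 1 m, (σ - lam i) ^ (p - 1) * lam i) p₁ σ = 0 → σ = σ₁)
    (hσ₂ : lam m < σ₂)
    (hσ₂zero : (fun (p : ℝ) (σ : ℝ) =>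
      (1 / (m : ℝ)) * ∑ i ∈ Finset.Icc 1 m, (σ - lam i) ^ p -
        (c / (m : ℝ)) * ∑ i ∈ Finset.Icc 1 m, (σ - lam i) ^ (p - 1) * lam i) p₂ σ₂ = 0) :
    σ₂ ≤ σ₁ := by
  by_contra hcon
  push_neg at hcon
  have hmR : (0 : ℝ) < (m : ℝ) := by exact_mod_cast Nat.pos_of_ne_zero (by omega)
  have hmem : ∀ i ∈ Finset.Icc 1 m, 0 < lam i ∧ lam i ≤ lam m := by
    intro i hi
    rw [Finset.mem_Icc] at hi
    exact ⟨hpos i hi.1 hi.2, hmono i m hi.1 hi.2 le_rfl⟩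
  -- combined form of f
  have hsum : ∀ p σ : ℝ,
      (1 / (m : ℝ)) * ∑ i ∈ Finset.Icc 1 m, (σ - lam i) ^ p -
        (c / (m : ℝ)) * ∑ i ∈ Finset.Icc 1 m, (σ - lam i) ^ (p - 1) * lam i
      = (1 / (m : ℝ)) * ∑ i ∈ Finset.Icc 1 m,
          ((σ - lam i) ^ p - c * ((σ - lam i) ^ (p - 1) * lam i)) := by
    intro p σ
    rw [Finset.sum_sub_distrib, ← Finset.mul_sum]
    ring
  set G : ℝ → ℝ := fun σ => (1 / (m : ℝ)) * ∑ i ∈ Finset.Icc 1 m,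
      ((σ - lam i) ^ p₁ - c * ((σ - lam i) ^ (p₁ - 1) * lam i)) with hGdef
  -- sum for p₂ at σ₂ vanishes
  have h2 : ∑ i ∈ Finset.Icc 1 m,
      ((σ₂ - lam i) ^ p₂ - c * ((σ₂ - lam i) ^ (p₂ - 1) * lam i)) = 0 := by
    have h := (hsum p₂ σ₂).symm.trans hσ₂zero
    have := mul_eq_zero.mp h
    rcases this with h' | h'
    · exfalso; rw [one_div] at h'; exact (inv_ne_zero hmR.ne') h'
    · exact h'
  -- G σ₂ ≤ 0
  have hGσ₂le : G σ₂ ≤ 0 := by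
    have hterm : ∀ i ∈ Finset.Icc 1 m,
        (σ₂ - lam i) ^ p₁ - c * ((σ₂ - lam i) ^ (p₁ - 1) * lam i) ≤
          (c * σ₂ / (1 + c)) ^ (p₁ - p₂) *
            ((σ₂ - lam i) ^ p₂ - c * ((σ₂ - lam i) ^ (p₂ - 1) * lam i)) := by
      intro i hi
      obtain ⟨hl, hlm⟩ := hmem i hi
      have ha : 0 < σ₂ - lam i := by linarith
      have := stmt17_term_le c p₁ p₂ (σ₂ - lam i) (lam i) hc ha hl hp12
      rwa [sub_add_cancel] at this
    have hle : ∑ i ∈ Finset.Icc 1 m,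
        ((σ₂ - lam i) ^ p₁ - c * ((σ₂ - lam i) ^ (p₁ - 1) * lam i)) ≤
        ∑ i ∈ Finset.Icc 1 m, (c * σ₂ / (1 + c)) ^ (p₁ - p₂) *
            ((σ₂ - lam i) ^ p₂ - c * ((σ₂ - lam i) ^ (p₂ - 1) * lam i)) :=
      Finset.sum_le_sum hterm
    rw [← Finset.mul_sum, h2, mul_zero] at hle
    have : G σ₂ = (1 / (m : ℝ)) * ∑ i ∈ Finset.Icc 1 m,
        ((σ₂ - lam i) ^ p₁ - c * ((σ₂ - lam i) ^ (p₁ - 1) * lam i)) := rfl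
    rw [this]
    have h1m : 0 < (1 / (m : ℝ)) := by positivity
    nlinarith
  -- G σ₂ < 0 (otherwise σ₂ = σ₁)
  have hGσ₂lt : G σ₂ < 0 := by
    rcases lt_or_eq_of_le hGσ₂le with h | h
    · exact h
    · exfalso
      have hz : (1 / (m : ℝ)) * ∑ i ∈ Finset.Icc 1 m, (σ₂ - lam i) ^ p₁ -
          (c / (m : ℝ)) * ∑ i ∈ Finset.Icc 1 m, (σ₂ - lam i) ^ (p₁ - 1) * lam i = 0 := by
        rw [hsum p₁ σ₂]; exact h
      have := hσ₁uniq σ₂ hσ₂ hz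
      linarith
  -- a point far right where G is positive
  set σ₀ : ℝ := max σ₂ ((1 + c) * lam m) + 1 with hσ₀def
  have hσ₂σ₀ : σ₂ < σ₀ := by
    have := le_max_left σ₂ ((1 + c) * lam m); simp only [hσ₀def]; linarith
  have hcm : (1 + c) * lam m < σ₀ := by
    have := le_max_right σ₂ ((1 + c) * lam m); simp only [hσ₀def]; linarith
  have hGσ₀pos : 0 < G σ₀ := by
    have : G σ₀ = (1 / (m : ℝ)) * ∑ i ∈ Finset.Icc 1 m,
        ((σ₀ - lam i) ^ p₁ - c * ((σ₀ - lam i) ^ (p₁ - 1) * lam i)) := rfl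
    rw [this]
    have hpos' : 0 < ∑ i ∈ Finset.Icc 1 m,
        ((σ₀ - lam i) ^ p₁ - c * ((σ₀ - lam i) ^ (p₁ - 1) * lam i)) := by
      apply Finset.sum_pos
      · intro i hi
        obtain ⟨hl, hlm⟩ := hmem i hi
        have h1c : (1 + c) * lam i ≤ (1 + c) * lam m :=
          mul_le_mul_of_nonneg_left hlm (by linarith)
        have ha : 0 < σ₀ - lam i := by nlinarith
        exact stmt17_term_pos c p₁ (σ₀ - lam i) (lam i) ha (by nlinarith)
      · exact Finset.nonempty_Icc.mpr hm
    positivity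
  -- continuity of G on [σ₂, σ₀]
  have hcont : ContinuousOn G (Set.Icc σ₂ σ₀) := by
    apply ContinuousOn.mul continuousOn_const
    apply continuousOn_finset_sum
    intro i hi
    obtain ⟨hl, hlm⟩ := hmem i hi
    have hne : ∀ x ∈ Set.Icc σ₂ σ₀, x - lam i ≠ 0 := by
      intro x hx
      have : σ₂ ≤ x := hx.1
      have : 0 < x - lam i := by linarith
      linarith
    have hc1 : ContinuousOn (fun x : ℝ => (x - lam i) ^ p₁) (Set.Icc σ₂ σ₀) :=
      ContinuousOn.rpow_const (continuousOn_id.sub continuousOn_const)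
        (fun x hx => Or.inl (hne x hx))
    have hc2 : ContinuousOn (fun x : ℝ => (x - lam i) ^ (p₁ - 1)) (Set.Icc σ₂ σ₀) :=
      ContinuousOn.rpow_const (continuousOn_id.sub continuousOn_const)
        (fun x hx => Or.inl (hne x hx))
    exact hc1.sub (continuousOn_const.mul (hc2.mul continuousOn_const))
  -- intermediate value
  have hmem0 : (0 : ℝ) ∈ Set.Icc (G σ₂) (G σ₀) := ⟨hGσ₂lt.le, hGσ₀pos.le⟩
  obtain ⟨x, hx, hGx⟩ := intermediate_value_Icc hσ₂σ₀.le hcont hmem0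
  have hxgt : lam m < x := lt_of_lt_of_le hσ₂ hx.1
  have hz : (1 / (m : ℝ)) * ∑ i ∈ Finset.Icc 1 m, (x - lam i) ^ p₁ -
      (c / (m : ℝ)) * ∑ i ∈ Finset.Icc 1 m, (x - lam i) ^ (p₁ - 1) * lam i = 0 := by
    rw [hsum p₁ x]; exact hGx
  have hxeq : x = σ₁ := hσ₁uniq x hxgt hz
  have : σ₂ ≤ x := hx.1
  linarith
end

section
/- Let m ≥ 1, let 0 < λ_1 ≤ λ_2 ≤ … ≤ λ_m be reals, let c > 0, and let S be a real number. Suppose that for every real σ ≤ S: Σ_{i=1}^m ((σ − λ_i)₊)² ≤ 2c Σ_{i=1}^m (σ − λ_i)₊ · λ_i, where x₊ = max(x, 0). Then for every real p ≥ 2 and every real σ ≤ S: Σ_{i=1}^m ((σ − λ_i)₊)^p ≤ p·c Σ_{i=1}^m ((σ − λ_i)₊)^{p−1} λ_i, where for t > 0 the power 0^t is interpreted as 0. -/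
open scoped ComplexInnerProductSpace

open MeasureTheory intervalIntegral

/-- Integrability of `t^q * (max (a-t) 0)^n` on `[0,b]`. -/
lemma aux_intble (q a b : ℝ) (hq : -1 < q) (hb : 0 ≤ b) (n : ℕ) :
    IntervalIntegrable (fun t => t ^ q * (max (a - t) 0) ^ n) volume 0 b := by
  have hg : IntervalIntegrable (fun t => |a| ^ n * t ^ q) volume 0 b :=
    (intervalIntegrable_rpow' hq).const_mul _
  refine hg.mono_fun ?_ ?_
  · rw [Set.uIoc_of_le hb]
    refine ContinuousOn.aestronglyMeasurable ?_ measurableSet_Ioc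
    refine ContinuousOn.mul ?_
      (((continuous_const.sub continuous_id).max continuous_const).pow n).continuousOn
    intro t ht
    exact (Real.continuousAt_rpow_const t q (Or.inl (ne_of_gt ht.1))).continuousWithinAt
  · filter_upwards [ae_restrict_mem measurableSet_Ioc] with t ht
    rw [Set.uIoc_of_le hb] at ht
    have ht0 : 0 < t := ht.1
    have h1 : (0:ℝ) ≤ t ^ q := Real.rpow_nonneg ht0.le q
    have h2 : max (a - t) 0 ≤ |a| := by
      rcases le_total (a - t) 0 with h | h
      · simpa [max_eq_right h] using abs_nonneg a
      · calc max (a - t) 0 = a - t := max_eq_left h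
          _ ≤ a := by linarith
          _ ≤ |a| := le_abs_self a
    have h3 : (0:ℝ) ≤ max (a - t) 0 := le_max_right _ _
    have e1 : |t ^ q * max (a - t) 0 ^ n| = t ^ q * max (a - t) 0 ^ n :=
      abs_of_nonneg (mul_nonneg h1 (pow_nonneg h3 n))
    have e2 : |(|a| ^ n * t ^ q)| = |a| ^ n * t ^ q :=
      abs_of_nonneg (mul_nonneg (pow_nonneg (abs_nonneg a) n) h1)
    simp only [Real.norm_eq_abs]
    rw [e1, e2]
    calc t ^ q * max (a - t) 0 ^ n ≤ t ^ q * |a| ^ n :=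
          mul_le_mul_of_nonneg_left (pow_le_pow_left₀ h3 h2 n) h1
      _ = |a| ^ n * t ^ q := by ring

lemma aux_int1 (p a M : ℝ) (hp : 2 < p) (ha : 0 ≤ a) (hM : a ≤ M) :
    ∫ t in (0:ℝ)..M, t ^ (p - 3) * max (a - t) 0
      = a ^ (p - 1) / ((p - 1) * (p - 2)) := by
  have hq : (-1:ℝ) < p - 3 := by linarith
  have hq' : (-1:ℝ) < p - 2 := by linarith
  have hM0 : (0:ℝ) ≤ M := le_trans ha hM
  have hp1 : p - 1 ≠ 0 := by intro h; nlinarith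
  have hp2 : p - 2 ≠ 0 := by intro h; nlinarith
  rcases eq_or_lt_of_le ha with h0 | hapos
  · rw [← h0]
    have : ∫ t in (0:ℝ)..M, t ^ (p - 3) * max ((0:ℝ) - t) 0 = 0 := by
      rw [intervalIntegral.integral_congr (g := fun _ => (0:ℝ))]
      · simp
      · intro t ht
        rw [Set.uIcc_of_le hM0] at ht
        have h : (0:ℝ) - t ≤ 0 := by linarith [ht.1]
        show t ^ (p - 3) * max ((0:ℝ) - t) 0 = 0
        rw [max_eq_right h, mul_zero]
    rw [this, Real.zero_rpow hp1, zero_div]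
  · have hI0a : IntervalIntegrable (fun t => t ^ (p - 3) * max (a - t) 0) volume 0 a := by
      have := aux_intble (p - 3) a a hq ha 1
      simpa using this
    have hIaM : IntervalIntegrable (fun t => t ^ (p - 3) * max (a - t) 0) volume a M := by
      have := aux_intble (p - 3) a M hq hM0 1
      simp only [pow_one] at this
      exact this.mono_set (Set.uIcc_subset_uIcc (by simp [Set.mem_uIcc, ha, hM]) (by simp [Set.mem_uIcc, hM0]))
    rw [← intervalIntegral.integral_add_adjacent_intervals hI0a hIaM]
    have e2 : ∫ t in a..M, t ^ (p - 3) * max (a - t) 0 = 0 := by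
      rw [intervalIntegral.integral_congr (g := fun _ => (0:ℝ))]
      · simp
      · intro t ht
        rw [Set.uIcc_of_le hM] at ht
        have h : a - t ≤ 0 := by linarith [ht.1]
        show t ^ (p - 3) * max (a - t) 0 = 0
        rw [max_eq_right h, mul_zero]
    have e1 : ∫ t in (0:ℝ)..a, t ^ (p - 3) * max (a - t) 0
        = a * (a ^ (p - 2) / (p - 2)) - a ^ (p - 1) / (p - 1) := by
      rw [intervalIntegral.integral_congr
        (g := fun t => a * t ^ (p - 3) - t ^ (p - 2))]
      · rw [intervalIntegral.integral_sub ((intervalIntegrable_rpow' hq).const_mul a)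
          (intervalIntegrable_rpow' hq'),
          intervalIntegral.integral_const_mul, integral_rpow (Or.inl hq),
          integral_rpow (Or.inl hq')]
        rw [Real.zero_rpow (by intro h; nlinarith : p - 3 + 1 ≠ 0),
          Real.zero_rpow (by intro h; nlinarith : p - 2 + 1 ≠ 0)]
        ring_nf
      · intro t ht
        rw [Set.uIcc_of_le ha] at ht
        show t ^ (p - 3) * max (a - t) 0 = a * t ^ (p - 3) - t ^ (p - 2)
        rcases eq_or_lt_of_le ht.1 with h0 | htpos
        · rw [← h0]
          simp [Real.zero_rpow hp2, max_eq_left ha]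
          ring
        · have hmax : max (a - t) 0 = a - t := max_eq_left (by linarith [ht.2])
          have hpow : t ^ (p - 2) = t ^ (p - 3) * t := by
            rw [show p - 2 = (p - 3) + 1 by ring, Real.rpow_add htpos, Real.rpow_one]
          simp only [hmax, hpow]
          ring
    rw [e1, e2, add_zero]
    have h1 : a ^ (p - 1) = a ^ (p - 2) * a := by
      rw [show p - 1 = (p - 2) + 1 by ring, Real.rpow_add hapos, Real.rpow_one]
    rw [h1]
    field_simp
    ring

lemma aux_int2 (p a M : ℝ) (hp : 2 < p) (ha : 0 ≤ a) (hM : a ≤ M) :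
    ∫ t in (0:ℝ)..M, t ^ (p - 3) * (max (a - t) 0) ^ 2
      = 2 * a ^ p / (p * (p - 1) * (p - 2)) := by
  have hq : (-1:ℝ) < p - 3 := by linarith
  have hq' : (-1:ℝ) < p - 2 := by linarith
  have hq'' : (-1:ℝ) < p - 1 := by linarith
  have hM0 : (0:ℝ) ≤ M := le_trans ha hM
  have hp0 : p ≠ 0 := by intro h; nlinarith
  have hp1 : p - 1 ≠ 0 := by intro h; nlinarith
  have hp2 : p - 2 ≠ 0 := by intro h; nlinarith
  rcases eq_or_lt_of_le ha with h0 | hapos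
  · rw [← h0]
    have : ∫ t in (0:ℝ)..M, t ^ (p - 3) * (max ((0:ℝ) - t) 0) ^ 2 = 0 := by
      rw [intervalIntegral.integral_congr (g := fun _ => (0:ℝ))]
      · simp
      · intro t ht
        rw [Set.uIcc_of_le hM0] at ht
        have h : (0:ℝ) - t ≤ 0 := by linarith [ht.1]
        show t ^ (p - 3) * (max ((0:ℝ) - t) 0) ^ 2 = 0
        rw [max_eq_right h]
        simp
    rw [this, Real.zero_rpow hp0]
    simp
  · have hI0a : IntervalIntegrable (fun t => t ^ (p - 3) * (max (a - t) 0) ^ 2) volume 0 a :=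
      aux_intble (p - 3) a a hq ha 2
    have hIaM : IntervalIntegrable (fun t => t ^ (p - 3) * (max (a - t) 0) ^ 2) volume a M := by
      exact (aux_intble (p - 3) a M hq hM0 2).mono_set
        (Set.uIcc_subset_uIcc (by simp [Set.mem_uIcc, ha, hM]) (by simp [Set.mem_uIcc, hM0]))
    rw [← intervalIntegral.integral_add_adjacent_intervals hI0a hIaM]
    have e2 : ∫ t in a..M, t ^ (p - 3) * (max (a - t) 0) ^ 2 = 0 := by
      rw [intervalIntegral.integral_congr (g := fun _ => (0:ℝ))]
      · simp
      · intro t ht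
        rw [Set.uIcc_of_le hM] at ht
        have h : a - t ≤ 0 := by linarith [ht.1]
        show t ^ (p - 3) * (max (a - t) 0) ^ 2 = 0
        rw [max_eq_right h]
        simp
    have e1 : ∫ t in (0:ℝ)..a, t ^ (p - 3) * (max (a - t) 0) ^ 2
        = a ^ 2 * (a ^ (p - 2) / (p - 2)) - 2 * a * (a ^ (p - 1) / (p - 1))
          + a ^ p / p := by
      rw [intervalIntegral.integral_congr
        (g := fun t => a ^ 2 * t ^ (p - 3) - 2 * a * t ^ (p - 2) + t ^ (p - 1))]
      · rw [intervalIntegral.integral_add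
          (((intervalIntegrable_rpow' hq).const_mul _).sub
            ((intervalIntegrable_rpow' hq').const_mul _))
          (intervalIntegrable_rpow' hq''),
          intervalIntegral.integral_sub ((intervalIntegrable_rpow' hq).const_mul _)
            ((intervalIntegrable_rpow' hq').const_mul _),
          intervalIntegral.integral_const_mul, intervalIntegral.integral_const_mul,
          integral_rpow (Or.inl hq), integral_rpow (Or.inl hq'), integral_rpow (Or.inl hq'')]
        rw [Real.zero_rpow (by intro h; nlinarith : p - 3 + 1 ≠ 0),
          Real.zero_rpow (by intro h; nlinarith : p - 2 + 1 ≠ 0),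
          Real.zero_rpow (by intro h; nlinarith : p - 1 + 1 ≠ 0)]
        ring_nf
      · intro t ht
        rw [Set.uIcc_of_le ha] at ht
        show t ^ (p - 3) * (max (a - t) 0) ^ 2
          = a ^ 2 * t ^ (p - 3) - 2 * a * t ^ (p - 2) + t ^ (p - 1)
        rcases eq_or_lt_of_le ht.1 with h0 | htpos
        · rw [← h0]
          simp [Real.zero_rpow hp2, Real.zero_rpow hp1, max_eq_left ha]
          ring
        · have hmax : max (a - t) 0 = a - t := max_eq_left (by linarith [ht.2])
          have hpow1 : t ^ (p - 2) = t ^ (p - 3) * t := by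
            rw [show p - 2 = (p - 3) + 1 by ring, Real.rpow_add htpos, Real.rpow_one]
          have hpow2 : t ^ (p - 1) = t ^ (p - 3) * t * t := by
            rw [show p - 1 = (p - 3) + 1 + 1 by ring, Real.rpow_add htpos,
              Real.rpow_add htpos, Real.rpow_one]
          simp only [hmax, hpow1, hpow2]
          ring
    rw [e1, e2, add_zero]
    have h1 : a ^ (p - 1) = a ^ (p - 2) * a := by
      rw [show p - 1 = (p - 2) + 1 by ring, Real.rpow_add hapos, Real.rpow_one]
    have h2 : a ^ p = a ^ (p - 1) * a := by
      rw [← Real.rpow_add_one (ne_of_gt hapos) (p - 1)]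
      ring_nf
    rw [h2, h1]
    field_simp
    ring

/-- Shifting a truncation. -/
lemma aux_shift (a t : ℝ) (ht : 0 ≤ t) : max (max a 0 - t) 0 = max (a - t) 0 := by
  rcases le_total a 0 with h | h
  · rw [max_eq_right h, max_eq_right (by linarith), max_eq_right (by linarith)]
  · rw [max_eq_left h]

set_option maxHeartbeats 1000000 in
theorem stmt18
    (m : ℕ) (hm : 1 ≤ m) (lam : ℕ → ℝ)
    (hpos : ∀ i : ℕ, 1 ≤ i → i ≤ m → 0 < lam i)
    (hmono : ∀ i j : ℕ, 1 ≤ i → i ≤ j → j ≤ m → lam i ≤ lam j)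
    (c : ℝ) (hc : 0 < c) (S : ℝ)
    (h2 : ∀ σ : ℝ, σ ≤ S →
      ∑ i ∈ Finset.Icc 1 m, (max (σ - lam i) 0) ^ 2
        ≤ 2 * c * ∑ i ∈ Finset.Icc 1 m, (max (σ - lam i) 0) * lam i) :
    ∀ p : ℝ, 2 ≤ p → ∀ σ : ℝ, σ ≤ S →
      ∑ i ∈ Finset.Icc 1 m, (max (σ - lam i) 0) ^ p
        ≤ p * c * ∑ i ∈ Finset.Icc 1 m, (max (σ - lam i) 0) ^ (p - 1) * lam i := by
  intro p hp σ hσ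
  rcases eq_or_lt_of_le hp with hp2 | hp2
  · -- case p = 2
    rw [← hp2]
    have := h2 σ hσ
    calc ∑ i ∈ Finset.Icc 1 m, (max (σ - lam i) 0) ^ (2:ℝ)
        = ∑ i ∈ Finset.Icc 1 m, (max (σ - lam i) 0) ^ 2 := by
          refine Finset.sum_congr rfl fun i _ => ?_
          rw [show ((2:ℝ)) = ((2:ℕ):ℝ) by norm_num, Real.rpow_natCast]
      _ ≤ 2 * c * ∑ i ∈ Finset.Icc 1 m, (max (σ - lam i) 0) * lam i := this
      _ = 2 * c * ∑ i ∈ Finset.Icc 1 m, (max (σ - lam i) 0) ^ ((2:ℝ) - 1) * lam i := by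
          congr 1
          refine Finset.sum_congr rfl fun i _ => ?_
          norm_num
  · -- case p > 2
    set A : ℕ → ℝ := fun i => max (σ - lam i) 0 with hA
    set M : ℝ := max σ 0 with hMdef
    have hM0 : (0:ℝ) ≤ M := le_max_right _ _
    have hA0 : ∀ i, 0 ≤ A i := fun i => le_max_right _ _
    have hAM : ∀ i ∈ Finset.Icc 1 m, A i ≤ M := by
      intro i hi
      obtain ⟨hi1, hi2⟩ := Finset.mem_Icc.mp hi
      have := hpos i hi1 hi2
      exact max_le_max (by linarith) le_rfl
    have hq : (-1:ℝ) < p - 3 := by linarith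
    have hp0 : (0:ℝ) < p := by linarith
    have hp1 : (0:ℝ) < p - 1 := by linarith
    have hpm2 : (0:ℝ) < p - 2 := by linarith
    -- key shift property
    have hsh : ∀ (i : ℕ) (t : ℝ), 0 ≤ t → max (A i - t) 0 = max ((σ - t) - lam i) 0 := by
      intro i t ht
      have h1 : σ - lam i - t = σ - t - lam i := by ring
      rw [hA]
      rw [aux_shift (σ - lam i) t ht, h1]
    -- integrabilities
    have hFint : IntervalIntegrable
        (fun t => ∑ i ∈ Finset.Icc 1 m, t ^ (p - 3) * (max (A i - t) 0) ^ 2) volume 0 M := by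
      have h := IntervalIntegrable.sum (μ := volume) (a := (0:ℝ)) (b := M)
        (f := fun i => fun t => t ^ (p - 3) * (max (A i - t) 0) ^ 2)
        (Finset.Icc 1 m) (fun i _ => aux_intble (p - 3) (A i) M hq hM0 2)
      have heq : (∑ i ∈ Finset.Icc 1 m, fun t => t ^ (p - 3) * (max (A i - t) 0) ^ 2)
          = fun t => ∑ i ∈ Finset.Icc 1 m, t ^ (p - 3) * (max (A i - t) 0) ^ 2 := by
        funext t; simp
      rwa [heq] at h
    have hGint : IntervalIntegrable
        (fun t => 2 * c * ∑ i ∈ Finset.Icc 1 m,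
          t ^ (p - 3) * max (A i - t) 0 * lam i) volume 0 M := by
      have h := IntervalIntegrable.sum (μ := volume) (a := (0:ℝ)) (b := M)
        (f := fun i => fun t => t ^ (p - 3) * max (A i - t) 0 * lam i)
        (Finset.Icc 1 m) (fun i _ => by
          have := (aux_intble (p - 3) (A i) M hq hM0 1).mul_const (lam i)
          simpa using this)
      have heq : (∑ i ∈ Finset.Icc 1 m, fun t => t ^ (p - 3) * max (A i - t) 0 * lam i)
          = fun t => ∑ i ∈ Finset.Icc 1 m, t ^ (p - 3) * max (A i - t) 0 * lam i := by
        funext t; simp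
      rw [heq] at h
      exact h.const_mul (2 * c)
    -- pointwise inequality
    have hpt : ∀ t ∈ Set.Icc (0:ℝ) M,
        (∑ i ∈ Finset.Icc 1 m, t ^ (p - 3) * (max (A i - t) 0) ^ 2)
          ≤ 2 * c * ∑ i ∈ Finset.Icc 1 m, t ^ (p - 3) * max (A i - t) 0 * lam i := by
      intro t ht
      have ht0 : 0 ≤ t := ht.1
      have htq : (0:ℝ) ≤ t ^ (p - 3) := Real.rpow_nonneg ht0 _
      have hbase := h2 (σ - t) (by linarith)
      calc (∑ i ∈ Finset.Icc 1 m, t ^ (p - 3) * (max (A i - t) 0) ^ 2)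
          = t ^ (p - 3) * ∑ i ∈ Finset.Icc 1 m, (max ((σ - t) - lam i) 0) ^ 2 := by
            rw [Finset.mul_sum]
            exact Finset.sum_congr rfl fun i _ => by rw [hsh i t ht0]
        _ ≤ t ^ (p - 3) * (2 * c * ∑ i ∈ Finset.Icc 1 m, (max ((σ - t) - lam i) 0) * lam i) :=
            mul_le_mul_of_nonneg_left hbase htq
        _ = 2 * c * ∑ i ∈ Finset.Icc 1 m, t ^ (p - 3) * max (A i - t) 0 * lam i := by
            simp only [Finset.mul_sum]
            refine Finset.sum_congr rfl fun i _ => ?_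
            rw [hsh i t ht0]
            ring
    have hKpos : (0:ℝ) < p * (p - 1) * (p - 2) := by positivity
    have hKne : p * (p - 1) * (p - 2) ≠ 0 := ne_of_gt hKpos
    calc ∑ i ∈ Finset.Icc 1 m, A i ^ p
        = (p * (p - 1) * (p - 2) / 2) *
            ∑ i ∈ Finset.Icc 1 m, ∫ t in (0:ℝ)..M, t ^ (p - 3) * (max (A i - t) 0) ^ 2 := by
          rw [Finset.mul_sum]
          refine Finset.sum_congr rfl fun i hi => ?_
          rw [aux_int2 p (A i) M hp2 (hA0 i) (hAM i hi)]
          field_simp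
      _ = (p * (p - 1) * (p - 2) / 2) *
            ∫ t in (0:ℝ)..M, ∑ i ∈ Finset.Icc 1 m, t ^ (p - 3) * (max (A i - t) 0) ^ 2 := by
          rw [intervalIntegral.integral_finset_sum
            (fun i _ => aux_intble (p - 3) (A i) M hq hM0 2)]
      _ ≤ (p * (p - 1) * (p - 2) / 2) *
            ∫ t in (0:ℝ)..M, 2 * c * ∑ i ∈ Finset.Icc 1 m,
              t ^ (p - 3) * max (A i - t) 0 * lam i := by
          refine mul_le_mul_of_nonneg_left ?_ (by positivity)
          exact intervalIntegral.integral_mono_on hM0 hFint hGint hpt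
      _ = (p * (p - 1) * (p - 2) / 2) * (2 * c *
            ∑ i ∈ Finset.Icc 1 m, (A i ^ (p - 1) / ((p - 1) * (p - 2))) * lam i) := by
          congr 1
          rw [intervalIntegral.integral_const_mul]
          congr 1
          rw [intervalIntegral.integral_finset_sum (fun i _ => by
            have := (aux_intble (p - 3) (A i) M hq hM0 1).mul_const (lam i)
            simpa using this)]
          refine Finset.sum_congr rfl fun i hi => ?_
          rw [intervalIntegral.integral_mul_const,
            aux_int1 p (A i) M hp2 (hA0 i) (hAM i hi)]
      _ = p * c * ∑ i ∈ Finset.Icc 1 m, A i ^ (p - 1) * lam i := by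
          rw [Finset.mul_sum, Finset.mul_sum, Finset.mul_sum]
          refine Finset.sum_congr rfl fun i _ => ?_
          field_simp
end

section
/- Let m ≥ 1, let 0 < λ_1 ≤ λ_2 ≤ … ≤ λ_m be reals, let c > 0, let q ≥ p ≥ 2 be reals, and let S be a real number. Suppose that for every real σ ≤ S: Σ_{i=1}^m ((σ − λ_i)₊)^p ≤ p·c Σ_{i=1}^m ((σ − λ_i)₊)^{p−1} λ_i, where x₊ = max(x, 0). Then for every real σ ≤ S: Σ_{i=1}^m ((σ − λ_i)₊)^q ≤ q·c Σ_{i=1}^m ((σ − λ_i)₊)^{q−1} λ_i, where for t > 0 the power 0^t is interpreted as 0. -/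
open scoped ComplexInnerProductSpace

open MeasureTheory intervalIntegral Set

noncomputable def AL.K (r s : ℝ) : ℝ := ∫ u in (0:ℝ)..1, u ^ r * (1 - u) ^ s

namespace AL

lemma K_eq_beta {r s : ℝ} : (K r s : ℂ) = Complex.betaIntegral (r + 1) (s + 1) := by
  rw [K, Complex.betaIntegral, ← intervalIntegral.integral_ofReal]
  apply intervalIntegral.integral_congr
  intro x hx
  rw [uIcc_of_le zero_le_one] at hx
  have hx0 : (0:ℝ) ≤ x := hx.1
  have hx1 : (0:ℝ) ≤ 1 - x := by linarith [hx.2]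
  push_cast
  rw [Complex.ofReal_cpow hx0, Complex.ofReal_cpow hx1]
  push_cast
  ring_nf

lemma K_pos {r s : ℝ} (hr : -1 < r) (hs : 0 < s) : 0 < K r s := by
  have hint : IntervalIntegrable (fun u : ℝ => u ^ r * (1 - u) ^ s) volume 0 1 :=
    (intervalIntegrable_rpow' hr).mul_continuousOn
      (((continuous_const.sub continuous_id).rpow_const
        (fun x => Or.inr hs.le)).continuousOn)
  refine intervalIntegral_pos_of_pos_on hint (fun x hx => ?_) one_pos
  exact mul_pos (Real.rpow_pos_of_pos hx.1 r) (Real.rpow_pos_of_pos (by linarith [hx.2]) s)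

lemma beta_rel {p q : ℝ} (hp : 1 < p) (hpq : p < q) :
    p * K (q - p - 1) (p - 1) = q * K (q - p - 1) p := by
  have hp0 : (0:ℝ) < p := by linarith
  have hq0 : (0:ℝ) < q := by linarith
  have hqp : (0:ℝ) < q - p := by linarith
  have e1 : ((K (q - p - 1) (p - 1) : ℝ) : ℂ)
      = Complex.betaIntegral ((q : ℂ) - p) p := by
    rw [K_eq_beta]; norm_num
  have e2 : ((K (q - p - 1) p : ℝ) : ℂ)
      = Complex.betaIntegral ((q : ℂ) - p) (p + 1) := by
    rw [K_eq_beta]; push_cast; ring_nf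
  have hre1 : 0 < ((q : ℂ) - p).re := by
    simpa using hqp
  have hre2 : 0 < ((p : ℂ)).re := by simpa using hp0
  have hre3 : 0 < ((p : ℂ) + 1).re := by simp; linarith
  have g1 := Complex.Gamma_mul_Gamma_eq_betaIntegral hre1 hre2
  have g2 := Complex.Gamma_mul_Gamma_eq_betaIntegral hre1 hre3
  have gp : Complex.Gamma ((p : ℂ) + 1) = p * Complex.Gamma p :=
    Complex.Gamma_add_one _ (by exact_mod_cast hp0.ne')
  have hqsum : ((q : ℂ) - p) + ((p : ℂ) + 1) = (q : ℂ) + 1 := by ring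
  have hqsum' : ((q : ℂ) - p) + (p : ℂ) = (q : ℂ) := by ring
  have gq : Complex.Gamma ((q : ℂ) + 1) = q * Complex.Gamma q :=
    Complex.Gamma_add_one _ (by exact_mod_cast hq0.ne')
  rw [hqsum, gq, gp] at g2
  rw [hqsum'] at g1
  have hGq : Complex.Gamma (q : ℂ) ≠ 0 := by
    rw [Complex.Gamma_ofReal]
    exact_mod_cast (Real.Gamma_pos_of_pos hq0).ne'
  -- p * B(q-p, p) = q * B(q-p, p+1)
  have key : (p : ℂ) * Complex.betaIntegral ((q : ℂ) - p) p
      = (q : ℂ) * Complex.betaIntegral ((q : ℂ) - p) (p + 1) := by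
    apply mul_left_cancel₀ hGq
    calc Complex.Gamma (q:ℂ) * ((p:ℂ) * Complex.betaIntegral ((q:ℂ) - p) p)
        = (p:ℂ) * (Complex.Gamma ((q:ℂ) - p) * Complex.Gamma p) := by rw [g1]; ring
      _ = (q:ℂ) * Complex.Gamma (q:ℂ) * Complex.betaIntegral ((q:ℂ) - p) (p+1) := by
          rw [← g2]; ring
      _ = Complex.Gamma (q:ℂ) * ((q:ℂ) * Complex.betaIntegral ((q:ℂ) - p) (p+1)) := by ring
  have : ((p * K (q - p - 1) (p - 1) : ℝ) : ℂ) = ((q * K (q - p - 1) p : ℝ) : ℂ) := by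
    push_cast
    rw [e1, e2]
    exact key
  exact_mod_cast this

lemma scal {r s : ℝ} (hr : -1 < r) (hs : 0 < s) {a : ℝ} (ha : 0 ≤ a) :
    ∫ t in (0:ℝ)..a, t ^ r * max (a - t) 0 ^ s = a ^ (r + 1 + s) * K r s := by
  rcases eq_or_lt_of_le ha with rfl | ha'
  · simp [Real.zero_rpow (by linarith : r + 1 + s ≠ 0)]
  · have h1 : ∫ t in (0:ℝ)..a, t ^ r * max (a - t) 0 ^ s
        = a • ∫ u in (0:ℝ)..1, (a * u) ^ r * max (a - a * u) 0 ^ s := by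
      rw [intervalIntegral.smul_integral_comp_mul_left
        (fun t => t ^ r * max (a - t) 0 ^ s) a]
      norm_num
    rw [h1]
    have h2 : ∫ u in (0:ℝ)..1, (a * u) ^ r * max (a - a * u) 0 ^ s
        = ∫ u in (0:ℝ)..1, a ^ (r + s) * (u ^ r * (1 - u) ^ s) := by
      apply intervalIntegral.integral_congr
      intro u hu
      dsimp only
      rw [uIcc_of_le zero_le_one] at hu
      have hu0 : (0:ℝ) ≤ u := hu.1
      have hu1 : (0:ℝ) ≤ 1 - u := by linarith [hu.2]
      have hmax : max (a - a * u) 0 = a * (1 - u) := by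
        rw [max_eq_left (by nlinarith)]; ring
      rw [hmax, Real.mul_rpow ha'.le hu0, Real.mul_rpow ha'.le hu1,
        Real.rpow_add ha']
      ring
    have hpow : a ^ (r + 1 + s) = a * (a ^ r * a ^ s) := by
      rw [show r + 1 + s = r + s + 1 by ring, Real.rpow_add ha',
        Real.rpow_add ha', Real.rpow_one]
      ring
    rw [h2, intervalIntegral.integral_const_mul, smul_eq_mul, K, hpow,
      Real.rpow_add ha']
    ring

lemma cont_max_rpow (b s : ℝ) (hs : 0 < s) :
    Continuous (fun t : ℝ => max (b - t) 0 ^ s) :=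
  ((continuous_const.sub continuous_id).max continuous_const).rpow_const
    (fun _ => Or.inr hs.le)

lemma intInt {r : ℝ} (hr : -1 < r) (b s x y : ℝ) (hs : 0 < s) :
    IntervalIntegrable (fun t : ℝ => t ^ r * max (b - t) 0 ^ s) volume x y :=
  (intervalIntegrable_rpow' hr).mul_continuousOn (cont_max_rpow b s hs).continuousOn

/-- main single-term identity -/
lemma full {r s : ℝ} (hr : -1 < r) (hs : 0 < s) {b A : ℝ} (hA : max b 0 ≤ A) :
    ∫ t in (0:ℝ)..A, t ^ r * max (b - t) 0 ^ s = (max b 0) ^ (r + 1 + s) * K r s := by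
  set a := max b 0 with hadef
  have ha0 : 0 ≤ a := le_max_right _ _
  have hA0 : (0:ℝ) ≤ A := le_trans ha0 hA
  have hcongr : ∫ t in (0:ℝ)..A, t ^ r * max (b - t) 0 ^ s
      = ∫ t in (0:ℝ)..A, t ^ r * max (a - t) 0 ^ s := by
    apply intervalIntegral.integral_congr
    intro t ht
    dsimp only
    rw [uIcc_of_le hA0] at ht
    have ht0 : 0 ≤ t := ht.1
    have heq : max (b - t) 0 = max (a - t) 0 := by
      rcases le_or_gt b 0 with hb | hb
      · have ha' : a = 0 := max_eq_right hb
        rw [ha', max_eq_right (by linarith : b - t ≤ 0),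
          max_eq_right (by linarith : (0:ℝ) - t ≤ 0)]
      · have ha' : a = b := max_eq_left hb.le
        rw [ha']
    rw [heq]
  rw [hcongr]
  have hsplit : ∫ t in (0:ℝ)..A, t ^ r * max (a - t) 0 ^ s
      = (∫ t in (0:ℝ)..a, t ^ r * max (a - t) 0 ^ s)
        + ∫ t in a..A, t ^ r * max (a - t) 0 ^ s :=
    (intervalIntegral.integral_add_adjacent_intervals
      (intInt hr a s 0 a hs) (intInt hr a s a A hs)).symm
  have hzero : ∫ t in a..A, t ^ r * max (a - t) 0 ^ s = 0 := by
    have : ∫ t in a..A, t ^ r * max (a - t) 0 ^ s = ∫ t in a..A, (0:ℝ) := by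
      apply intervalIntegral.integral_congr
      intro t ht
      dsimp only
      rw [uIcc_of_le hA] at ht
      rw [max_eq_right (by linarith [ht.1] : a - t ≤ 0), Real.zero_rpow hs.ne', mul_zero]
    rw [this, intervalIntegral.integral_zero]
  rw [hsplit, hzero, add_zero, scal hr hs ha0]

end AL

theorem stmt19
    (m : ℕ) (hm : 1 ≤ m) (lam : ℕ → ℝ)
    (hpos : ∀ i : ℕ, 1 ≤ i → i ≤ m → 0 < lam i)
    (hmono : ∀ i j : ℕ, 1 ≤ i → i ≤ j → j ≤ m → lam i ≤ lam j)
    (c : ℝ) (hc : 0 < c)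
    (p q : ℝ) (hp : 2 ≤ p) (hpq : p ≤ q) (S : ℝ)
    (hP : ∀ σ : ℝ, σ ≤ S →
      ∑ i ∈ Finset.Icc 1 m, (max (σ - lam i) 0) ^ p
        ≤ p * c * ∑ i ∈ Finset.Icc 1 m, (max (σ - lam i) 0) ^ (p - 1) * lam i) :
    ∀ σ : ℝ, σ ≤ S →
      ∑ i ∈ Finset.Icc 1 m, (max (σ - lam i) 0) ^ q
        ≤ q * c * ∑ i ∈ Finset.Icc 1 m, (max (σ - lam i) 0) ^ (q - 1) * lam i := by
  rcases eq_or_lt_of_le hpq with rfl | hlt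
  · exact hP
  intro σ hσ
  set r := q - p - 1 with hrdef
  have hr : (-1:ℝ) < r := by rw [hrdef]; linarith
  have hp0 : (0:ℝ) < p := by linarith
  have hp1 : (0:ℝ) < p - 1 := by linarith
  set A := max (σ - lam 1) 0 with hAdef
  have hA0 : (0:ℝ) ≤ A := le_max_right _ _
  have hle : ∀ i ∈ Finset.Icc 1 m, max (σ - lam i) 0 ≤ A := by
    intro i hi
    rw [Finset.mem_Icc] at hi
    exact max_le_max (by linarith [hmono 1 i le_rfl hi.1 hi.2]) le_rfl
  have hqe : r + 1 + p = q := by rw [hrdef]; ring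
  have hqe' : r + 1 + (p - 1) = q - 1 := by rw [hrdef]; ring
  have hint1 : ∀ i ∈ Finset.Icc 1 m, IntervalIntegrable
      (fun t : ℝ => t ^ r * max ((σ - lam i) - t) 0 ^ p) volume 0 A :=
    fun i _ => AL.intInt hr (σ - lam i) p 0 A hp0
  have hint2 : ∀ i ∈ Finset.Icc 1 m, IntervalIntegrable
      (fun t : ℝ => (t ^ r * max ((σ - lam i) - t) 0 ^ (p-1)) * (p * c * lam i))
      volume 0 A :=
    fun i _ => (AL.intInt hr (σ - lam i) (p-1) 0 A hp1).mul_const _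
  have hsum1 : IntervalIntegrable
      (fun t : ℝ => ∑ i ∈ Finset.Icc 1 m, t ^ r * max ((σ - lam i) - t) 0 ^ p)
      volume 0 A := by
    have h := IntervalIntegrable.sum (μ := volume) (Finset.Icc 1 m) hint1
    convert h using 1
    · rfl
    ext t
    simp
  have hsum2 : IntervalIntegrable
      (fun t : ℝ => ∑ i ∈ Finset.Icc 1 m,
        (t ^ r * max ((σ - lam i) - t) 0 ^ (p-1)) * (p * c * lam i))
      volume 0 A := by
    have h := IntervalIntegrable.sum (μ := volume) (Finset.Icc 1 m) hint2
    convert h using 1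
    · rfl
    ext t
    simp
  -- main chain
  have step1 : (∑ i ∈ Finset.Icc 1 m, (max (σ - lam i) 0) ^ q) * AL.K r p
      = ∫ t in (0:ℝ)..A, ∑ i ∈ Finset.Icc 1 m,
          t ^ r * max ((σ - lam i) - t) 0 ^ p := by
    rw [intervalIntegral.integral_finset_sum hint1, Finset.sum_mul]
    apply Finset.sum_congr rfl
    intro i hi
    rw [AL.full hr hp0 (hle i hi), hqe]
  have step2 : (∫ t in (0:ℝ)..A, ∑ i ∈ Finset.Icc 1 m,
          t ^ r * max ((σ - lam i) - t) 0 ^ p)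
      ≤ ∫ t in (0:ℝ)..A, ∑ i ∈ Finset.Icc 1 m,
          (t ^ r * max ((σ - lam i) - t) 0 ^ (p-1)) * (p * c * lam i) := by
    apply intervalIntegral.integral_mono_on hA0 hsum1 hsum2
    intro t ht
    have ht0 : 0 ≤ t := ht.1
    have htr : 0 ≤ t ^ r := Real.rpow_nonneg ht0 r
    have hPt := hP (σ - t) (by linarith)
    have lhs_eq : ∑ i ∈ Finset.Icc 1 m, t ^ r * max ((σ - lam i) - t) 0 ^ p
        = t ^ r * ∑ i ∈ Finset.Icc 1 m, max ((σ - t) - lam i) 0 ^ p := by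
      rw [Finset.mul_sum]
      apply Finset.sum_congr rfl
      intro i _
      congr 3
      ring
    have rhs_eq : ∑ i ∈ Finset.Icc 1 m,
        (t ^ r * max ((σ - lam i) - t) 0 ^ (p-1)) * (p * c * lam i)
        = t ^ r * (p * c * ∑ i ∈ Finset.Icc 1 m,
            max ((σ - t) - lam i) 0 ^ (p-1) * lam i) := by
      rw [Finset.mul_sum, Finset.mul_sum]
      apply Finset.sum_congr rfl
      intro i _
      have : (σ - lam i) - t = (σ - t) - lam i := by ring
      rw [this]
      ring
    rw [lhs_eq, rhs_eq]
    exact mul_le_mul_of_nonneg_left hPt htr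
  have step3 : (∫ t in (0:ℝ)..A, ∑ i ∈ Finset.Icc 1 m,
          (t ^ r * max ((σ - lam i) - t) 0 ^ (p-1)) * (p * c * lam i))
      = p * c * AL.K r (p-1) * ∑ i ∈ Finset.Icc 1 m,
          (max (σ - lam i) 0) ^ (q - 1) * lam i := by
    rw [intervalIntegral.integral_finset_sum hint2]
    rw [Finset.mul_sum]
    apply Finset.sum_congr rfl
    intro i hi
    rw [intervalIntegral.integral_mul_const, AL.full hr hp1 (hle i hi), hqe']
    ring
  have hbeta : p * AL.K r (p - 1) = q * AL.K r p := by
    rw [hrdef]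
    exact AL.beta_rel (by linarith) hlt
  have hKpos : 0 < AL.K r p := AL.K_pos hr hp0
  have final : (∑ i ∈ Finset.Icc 1 m, (max (σ - lam i) 0) ^ q) * AL.K r p
      ≤ (q * c * ∑ i ∈ Finset.Icc 1 m,
          (max (σ - lam i) 0) ^ (q - 1) * lam i) * AL.K r p := by
    calc (∑ i ∈ Finset.Icc 1 m, (max (σ - lam i) 0) ^ q) * AL.K r p
        ≤ p * c * AL.K r (p-1) * ∑ i ∈ Finset.Icc 1 m,
            (max (σ - lam i) 0) ^ (q - 1) * lam i := by
          rw [step1, ← step3]; exact step2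
      _ = (q * c * ∑ i ∈ Finset.Icc 1 m,
            (max (σ - lam i) 0) ^ (q - 1) * lam i) * AL.K r p := by
          have : p * c * AL.K r (p-1) = c * (p * AL.K r (p-1)) := by ring
          rw [this, hbeta]; ring
  exact le_of_mul_le_mul_right final hKpos
end
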